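/- arXiv:2006.06876 — 6 statements merged into one kernel-verified Lean document; each statement's English description precedes it below -/
import Mathlib

section
/- Let Γ be a finite group and F a Γ-lattice. Then F is flasque if and only if Ext^1_Γ(F, P) = 0 for every permutation Γ-lattice P. -/
/-! Basic definitions for Γ-lattices over a finite group Γ. -/

/-- A `Γ`-lattice: a finitely generated free `ℤ`-module equipped with a
`ℤ`-linear action of `Γ`, i.e. a `ℤ[Γ]`-module which is finitely generated
and free as a `ℤ`-module. -/
structure GammaLattice (Γ : Type) [Group Γ] where
  carrier : Type
  [isAddCommGroup : AddCommGroup carrier]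
  [isModule : Module ℤ carrier]
  ρ : Representation ℤ Γ carrier
  free : Module.Free ℤ carrier
  finite : Module.Finite ℤ carrier

attribute [instance] GammaLattice.isAddCommGroup GammaLattice.isModule

variable {Γ : Type} [Group Γ]

/-- A `ℤ`-linear map between `Γ`-representations is equivariant (i.e. is a
`ℤ[Γ]`-module homomorphism) if it commutes with the `Γ`-actions. -/
def IsEquivariantMap {M N : Type} [AddCommGroup M] [Module ℤ M]
    [AddCommGroup N] [Module ℤ N]
    (ρM : Representation ℤ Γ M) (ρN : Representation ℤ Γ N)
    (f : M →ₗ[ℤ] N) : Prop :=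
  ∀ (γ : Γ) (m : M), f (ρM γ m) = ρN γ (f m)

/-- A short exact sequence `0 → A → B → C → 0` of `ℤ[Γ]`-modules. -/
def IsShortExactSeq {A B C : Type} [AddCommGroup A] [Module ℤ A]
    [AddCommGroup B] [Module ℤ B] [AddCommGroup C] [Module ℤ C]
    (ρA : Representation ℤ Γ A) (ρB : Representation ℤ Γ B)
    (ρC : Representation ℤ Γ C)
    (f : A →ₗ[ℤ] B) (g : B →ₗ[ℤ] C) : Prop :=
  IsEquivariantMap ρA ρB f ∧ IsEquivariantMap ρB ρC g ∧
    Function.Injective f ∧ Function.Surjective g ∧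
    LinearMap.range f = LinearMap.ker g

/-- A `Γ`-lattice is a permutation lattice if it has a `ℤ`-basis permuted
by `Γ`. -/
def GammaLattice.IsPermutation (L : GammaLattice Γ) : Prop :=
  ∃ (ι : Type) (b : Module.Basis ι ℤ L.carrier),
    ∀ (γ : Γ) (i : ι), ∃ j : ι, L.ρ γ (b i) = b j

/-- A `Γ`-lattice is invertible if it is a direct summand of a permutation
`Γ`-lattice. -/
def GammaLattice.IsInvertible (L : GammaLattice Γ) : Prop :=
  ∃ N : GammaLattice Γ, N.IsPermutation ∧
    ∃ (i : L.carrier →ₗ[ℤ] N.carrier) (p : N.carrier →ₗ[ℤ] L.carrier),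
      IsEquivariantMap L.ρ N.ρ i ∧ IsEquivariantMap N.ρ L.ρ p ∧
        p.comp i = LinearMap.id

/-- A `Γ`-lattice is coflasque if `H¹(Γ', M) = 0` for every subgroup
`Γ' ≤ Γ`. -/
def GammaLattice.IsCoflasque (L : GammaLattice Γ) : Prop :=
  ∀ Γ' : Subgroup Γ,
    Subsingleton (groupCohomology.H1 (Rep.of (L.ρ.comp Γ'.subtype)))

/-- The dual lattice `M^∨ = Hom_ℤ(M, ℤ)` with the action
`(γ · f)(m) = f(γ⁻¹ · m)`. -/
noncomputable def GammaLattice.dual (L : GammaLattice Γ) : GammaLattice Γ where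
  carrier := Module.Dual ℤ L.carrier
  ρ := L.ρ.dual
  free := by have := L.free; have := L.finite; infer_instance
  finite := by have := L.free; have := L.finite; infer_instance

/-- A `Γ`-lattice is flasque if its dual is coflasque. -/
noncomputable def GammaLattice.IsFlasque (L : GammaLattice Γ) : Prop :=
  L.dual.IsCoflasque

/-- `Ext¹_Γ(A, B) = 0`, formulated as: every short exact sequence of
`ℤ[Γ]`-modules `0 → B → E → A → 0` splits (admits an equivariant section). -/
def Ext1Vanishes {A B : Type} [AddCommGroup A] [Module ℤ A]
    [AddCommGroup B] [Module ℤ B]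
    (ρA : Representation ℤ Γ A) (ρB : Representation ℤ Γ B) : Prop :=
  ∀ (E : Type) [AddCommGroup E] [Module ℤ E],
    ∀ (ρE : Representation ℤ Γ E) (ι : B →ₗ[ℤ] E) (π : E →ₗ[ℤ] A),
      IsShortExactSeq ρB ρE ρA ι π →
      ∃ s : A →ₗ[ℤ] E, IsEquivariantMap ρA ρE s ∧ π.comp s = LinearMap.id

/-- The direct sum (product) of two representations. -/
def prodRep {M N : Type} [AddCommGroup M] [Module ℤ M]
    [AddCommGroup N] [Module ℤ N]
    (ρM : Representation ℤ Γ M) (ρN : Representation ℤ Γ N) :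
    Representation ℤ Γ (M × N) where
  toFun γ := (ρM γ).prodMap (ρN γ)
  map_one' := by ext x <;> simp
  map_mul' g h := by ext x <;> simp [Module.End.mul_apply]

/-! ### Auxiliary development -/

section Aux

variable {M N : Type} [AddCommGroup M] [Module ℤ M] [AddCommGroup N] [Module ℤ N]

/-- A twisted 1-cocycle `Γ → Hom(M, N)` (for the conjugation action), in the
convention adapted to extensions `0 → N → E → M → 0`. -/
def MyCocycle (ρF : Representation ℤ Γ M) (ρP : Representation ℤ Γ N)
    (c : Γ → (M →ₗ[ℤ] N)) : Prop :=
  ∀ γ δ : Γ, ∀ m : M, c (γ * δ) m = ρP δ⁻¹ (c γ (ρF δ m)) + c δ m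

theorem MyCocycle.one {ρF : Representation ℤ Γ M} {ρP : Representation ℤ Γ N}
    {c : Γ → (M →ₗ[ℤ] N)} (hc : MyCocycle ρF ρP c) (m : M) : c 1 m = 0 := by
  have h := hc 1 1 m
  simp only [one_mul, inv_one, map_one, Module.End.one_apply] at h
  exact (add_right_cancel (a := (0 : N)) (by rw [zero_add]; exact h)).symm

/-- From `Ext¹ = 0` (splitting of extensions) we deduce that every twisted
cocycle is a coboundary. -/
theorem coboundary_of_ext1 {ρF : Representation ℤ Γ M} {ρP : Representation ℤ Γ N}
    (hext : Ext1Vanishes ρF ρP) {c : Γ → (M →ₗ[ℤ] N)} (hc : MyCocycle ρF ρP c) :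
    ∃ b : M →ₗ[ℤ] N, ∀ γ : Γ, ∀ m : M, c γ m = b m - ρP γ⁻¹ (b (ρF γ m)) := by
  -- build the extension `E = N × M` twisted by the cocycle `c`
  letI : Module ℤ (N × M) := Prod.instModule
  let T : Γ → ((N × M) →ₗ[ℤ] (N × M)) := fun γ =>
    LinearMap.prod
      ((ρP γ).comp (LinearMap.fst ℤ N M) +
        ((c γ⁻¹).comp ((ρF γ).comp (LinearMap.snd ℤ N M))))
      ((ρF γ).comp (LinearMap.snd ℤ N M))
  have hT : ∀ γ p m, T γ (p, m) = (ρP γ p + c γ⁻¹ (ρF γ m), ρF γ m) := by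
    intro γ p m; rfl
  have hmul : ∀ γ δ : Γ, T (γ * δ) = T γ * T δ := by
    intro γ δ
    refine LinearMap.ext fun x => ?_
    obtain ⟨p, m⟩ := x
    rw [Module.End.mul_apply, hT, hT, hT]
    refine Prod.ext ?_ ?_
    · show ρP (γ * δ) p + c (γ * δ)⁻¹ (ρF (γ * δ) m) =
        ρP γ (ρP δ p + c δ⁻¹ (ρF δ m)) + c γ⁻¹ (ρF γ (ρF δ m))
      have key := hc δ⁻¹ γ⁻¹ (ρF (γ * δ) m)
      have h1 : ρF γ⁻¹ (ρF (γ * δ) m) = ρF δ m := by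
        rw [← Module.End.mul_apply, ← map_mul]; group
      have h2 : ρF γ (ρF δ m) = ρF (γ * δ) m := by
        rw [← Module.End.mul_apply, ← map_mul]
      rw [map_mul, Module.End.mul_apply, mul_inv_rev, key, h1, h2,
        inv_inv, map_add, ← Module.End.mul_apply (ρP γ) (ρP δ), ← map_mul]
      abel
    · show ρF (γ * δ) m = ρF γ (ρF δ m)
      rw [← Module.End.mul_apply, ← map_mul]
  let ρE : Representation ℤ Γ (N × M) :=
    { toFun := T
      map_one' := by
        refine LinearMap.ext fun x => ?_
        obtain ⟨p, m⟩ := x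
        rw [hT]
        refine Prod.ext ?_ ?_
        · show ρP 1 p + c 1⁻¹ (ρF 1 m) = p
          rw [inv_one, map_one, map_one, Module.End.one_apply, Module.End.one_apply,
            hc.one, add_zero]
        · show ρF 1 m = m
          rw [map_one, Module.End.one_apply]
      map_mul' := hmul }
  have hses : IsShortExactSeq (Γ := Γ) ρP ρE ρF (LinearMap.inl ℤ N M)
      (LinearMap.snd ℤ N M) := by
    refine ⟨?_, ?_, LinearMap.inl_injective, Prod.snd_surjective, ?_⟩
    · intro γ p
      show ((ρP γ p, 0) : N × M) = ρE γ (p, 0)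
      rw [show ρE γ (p, 0) = T γ (p, 0) from rfl, hT]
      simp [hc.one]
    · intro γ x
      rfl
    · rw [LinearMap.range_inl, LinearMap.ker_snd]
  obtain ⟨s, hs, hsec⟩ := hext (N × M) ρE (LinearMap.inl ℤ N M) (LinearMap.snd ℤ N M) hses
  refine ⟨(LinearMap.fst ℤ N M).comp s, fun γ m => ?_⟩
  -- from equivariance of s, derive the coboundary identity
  have hsnd : ∀ m : M, (s m).2 = m := fun m =>
    congrArg (fun f => f m) (congrArg (fun g => g.toFun) hsec)
  have key : ∀ (δ : Γ) (m : M), (s (ρF δ m)).1 = ρP δ (s m).1 + c δ⁻¹ (ρF δ m) := by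
    intro δ m
    have h := hs δ m
    have h1 : s (ρF δ m) = ρE δ (s m) := h
    have h2 : ρE δ (s m) = T δ ((s m).1, (s m).2) := rfl
    rw [h1, h2, hT, hsnd]
  have h := key γ⁻¹ (ρF γ m)
  have hm : ρF γ⁻¹ (ρF γ m) = m := by
    rw [← Module.End.mul_apply, ← map_mul]; simp
  rw [hm, inv_inv] at h
  show c γ m = (s m).1 - ρP γ⁻¹ ((s (ρF γ m)).1)
  rw [h]
  abel

/-- Conversely, if every twisted cocycle is a coboundary and `M` is projective
over `ℤ`, then `Ext¹ = 0`. -/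
theorem ext1_of_coboundary {ρF : Representation ℤ Γ M} {ρP : Representation ℤ Γ N}
    (hproj : Module.Projective ℤ M)
    (hcb : ∀ c : Γ → (M →ₗ[ℤ] N), MyCocycle ρF ρP c →
      ∃ b : M →ₗ[ℤ] N, ∀ γ : Γ, ∀ m : M, c γ m = b m - ρP γ⁻¹ (b (ρF γ m))) :
    Ext1Vanishes ρF ρP := by
  intro E _ _ ρE ι π ⟨hι, hπ, hinj, hsurj, hrange⟩
  -- choose a `ℤ`-linear section of π
  obtain ⟨s₀, hs₀⟩ := Module.projective_lifting_property π LinearMap.id hsurj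
  have hs₀' : ∀ m : M, π (s₀ m) = m := fun m =>
    congrArg (fun f => f m) (congrArg (fun g => g.toFun) hs₀)
  -- the defect of equivariance of s₀
  let D : Γ → (M →ₗ[ℤ] E) := fun γ =>
    (ρE γ⁻¹).comp (s₀.comp (ρF γ)) - s₀
  have hD : ∀ γ m, D γ m = ρE γ⁻¹ (s₀ (ρF γ m)) - s₀ m := fun γ m => rfl
  have hDmem : ∀ γ m, D γ m ∈ LinearMap.range ι := by
    intro γ m
    rw [hrange, LinearMap.mem_ker, hD, map_sub, hπ γ⁻¹, hs₀', hs₀',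
      ← Module.End.mul_apply, ← map_mul, inv_mul_cancel, map_one,
      Module.End.one_apply, sub_self]
  letI : Module ℤ ↥(LinearMap.range ι) := (LinearMap.range ι).module
  let e := LinearEquiv.ofInjective ι hinj
  let cc : Γ → (M →ₗ[ℤ] N) := fun γ =>
    (e.symm.toLinearMap).comp ((D γ).codRestrict (LinearMap.range ι) (hDmem γ))
  have hcc : ∀ γ m, ι (cc γ m) = D γ m := by
    intro γ m
    show ι (e.symm ⟨D γ m, hDmem γ m⟩) = D γ m
    have : ∀ x : LinearMap.range ι, ι (e.symm x) = (x : E) := by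
      intro x
      conv_rhs => rw [← e.apply_symm_apply x]
      rfl
    rw [this]
  have hDcoc : ∀ γ δ m, D (γ * δ) m = ρE δ⁻¹ (D γ (ρF δ m)) + D δ m := by
    intro γ δ m
    rw [hD, hD, hD, map_sub]
    have h1 : ρE δ⁻¹ (ρE γ⁻¹ (s₀ (ρF γ (ρF δ m)))) = ρE (γ * δ)⁻¹ (s₀ (ρF (γ * δ) m)) := by
      rw [← Module.End.mul_apply (ρE δ⁻¹) (ρE γ⁻¹), ← map_mul,
        ← Module.End.mul_apply (ρF γ) (ρF δ), ← map_mul, mul_inv_rev]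
    rw [h1]
    abel
  have hmc : MyCocycle ρF ρP cc := by
    intro γ δ m
    apply hinj
    rw [hcc, map_add, hcc, hDcoc]
    have : ι (ρP δ⁻¹ (cc γ (ρF δ m))) = ρE δ⁻¹ (ι (cc γ (ρF δ m))) := hι δ⁻¹ _
    rw [this, hcc]
  obtain ⟨b, hb⟩ := hcb cc hmc
  refine ⟨s₀ + ι.comp b, ?_, ?_⟩
  · intro γ m
    show s₀ (ρF γ m) + ι (b (ρF γ m)) = ρE γ (s₀ m + ι (b m))
    have h1 : ρE γ⁻¹ (s₀ (ρF γ m)) = s₀ m + D γ m := by rw [hD]; abel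
    have h2 : D γ m = ι (b m) - ι (ρP γ⁻¹ (b (ρF γ m))) := by
      rw [← hcc, hb γ m, map_sub]
    have h3 : ι (ρP γ⁻¹ (b (ρF γ m))) = ρE γ⁻¹ (ι (b (ρF γ m))) := hι γ⁻¹ _
    have h4 : ρE γ⁻¹ (s₀ (ρF γ m) + ι (b (ρF γ m))) = s₀ m + ι (b m) := by
      rw [map_add, h1, h2, ← h3]; abel
    calc s₀ (ρF γ m) + ι (b (ρF γ m))
        = ρE γ (ρE γ⁻¹ (s₀ (ρF γ m) + ι (b (ρF γ m)))) := by
          rw [← Module.End.mul_apply, ← map_mul, mul_inv_cancel, map_one,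
            Module.End.one_apply]
      _ = ρE γ (s₀ m + ι (b m)) := by rw [h4]
  · refine LinearMap.ext fun m => ?_
    show π (s₀ m + ι (b m)) = m
    have : π (ι (b m)) = 0 := by
      have : ι (b m) ∈ LinearMap.ker π := by
        rw [← hrange]; exact ⟨b m, rfl⟩
      exact this
    rw [map_add, hs₀', this, add_zero]

end Aux

section Bridge

variable (F : GammaLattice Γ)

/-- Digested form of flasqueness: `H¹(H, F^∨)` vanishes, expressed with the
"inverted" cocycle convention. -/
def MyH1Vanishes (H : Subgroup Γ) : Prop :=
  ∀ u : H → (F.carrier →ₗ[ℤ] ℤ),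
    (∀ a b : H, u (a * b) = (u a).comp (F.ρ (b : Γ)) + u b) →
    ∃ ψ : F.carrier →ₗ[ℤ] ℤ, ∀ h : H, u h = ψ.comp (F.ρ (h : Γ)) - ψ

theorem myH1Vanishes_iff_flasque :
    F.IsFlasque ↔ ∀ H : Subgroup Γ, MyH1Vanishes F H := by
  constructor
  · intro hfl H u hu
    have hsub : Subsingleton (groupCohomology.H1 (Rep.of (F.dual.ρ.comp H.subtype))) :=
      hfl H
    set A : Rep ℤ H := Rep.of (F.dual.ρ.comp H.subtype) with hA
    let vfun : H → Module.Dual ℤ F.carrier := fun g => u g⁻¹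
    have vmem : vfun ∈ groupCohomology.cocycles₁ A := by
      refine (groupCohomology.mem_cocycles₁_iff (A := A) vfun).mpr ?_
      intro g h
      have harg : (((g⁻¹ : H) : Γ)) = ((g : Γ))⁻¹ := by simp
      have hstat : u (g * h)⁻¹ = (u h⁻¹).comp (F.ρ ((g : Γ))⁻¹) + u g⁻¹ := by
        rw [mul_inv_rev, hu h⁻¹ g⁻¹, harg]
      exact hstat
    have hmem : vfun ∈ groupCohomology.coboundaries₁ A :=
      (groupCohomology.H1π_eq_zero_iff (⟨vfun, vmem⟩ : groupCohomology.cocycles₁ A)).mp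
        (Subsingleton.elim _ _)
    obtain ⟨x, hx⟩ := hmem
    let x' : Module.Dual ℤ F.carrier := x
    refine ⟨x', fun h => ?_⟩
    have hstat : x'.comp (F.ρ (((h⁻¹ : H) : Γ))⁻¹) - x' = u h⁻¹⁻¹ := congrFun hx h⁻¹
    rw [inv_inv] at hstat
    have harg : ((((h⁻¹ : H) : Γ))⁻¹) = (h : Γ) := by simp
    rw [harg] at hstat
    exact hstat.symm
  · intro hmy H
    set A : Rep ℤ H := Rep.of (F.dual.ρ.comp H.subtype) with hA
    suffices hz : ∀ x : groupCohomology.H1 A, x = 0 from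
      ⟨fun x y => (hz x).trans (hz y).symm⟩
    intro x
    refine groupCohomology.H1_induction_on x fun f => ?_
    rw [groupCohomology.H1π_eq_zero_iff]
    let f1 : H → (F.carrier →ₗ[ℤ] ℤ) := fun g => f.1 g
    let u : H → (F.carrier →ₗ[ℤ] ℤ) := fun h => f1 h⁻¹
    have hu : ∀ a b : H, u (a * b) = (u a).comp (F.ρ (b : Γ)) + u b := by
      intro a b
      have hstat : f1 (b⁻¹ * a⁻¹) = (f1 a⁻¹).comp (F.ρ (((b⁻¹ : H) : Γ))⁻¹) + f1 b⁻¹ :=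
        (groupCohomology.mem_cocycles₁_iff f.1).mp f.2 b⁻¹ a⁻¹
      have harg : ((((b⁻¹ : H) : Γ))⁻¹) = (b : Γ) := by simp
      rw [harg] at hstat
      show f1 (a * b)⁻¹ = (f1 a⁻¹).comp (F.ρ (b : Γ)) + f1 b⁻¹
      rw [mul_inv_rev, hstat]
    obtain ⟨ψ, hψ⟩ := hmy H u hu
    refine ⟨ψ, funext fun g => ?_⟩
    have hstat := hψ g⁻¹
    have h2 : u g⁻¹ = f1 g := by show f1 g⁻¹⁻¹ = f1 g; rw [inv_inv]
    have harg : (((g⁻¹ : H) : Γ)) = ((g : Γ))⁻¹ := by simp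
    rw [h2, harg] at hstat
    exact (hstat.symm : ψ.comp (F.ρ ((g : Γ))⁻¹) - ψ = f1 g)

end Bridge

section Shapiro

variable (F : GammaLattice Γ) {N : Type} [AddCommGroup N] [Module ℤ N]

/-- Shapiro, forward direction: if `F` is flasque (digested form), then every
twisted cocycle valued in a permutation module is a coboundary. -/
theorem shapiro_forward [Finite Γ] (ρP : Representation ℤ Γ N)
    {ι : Type} [Finite ι] (bP : Module.Basis ι ℤ N) (σ : Γ → ι → ι)
    (hσ : ∀ γ i, ρP γ (bP i) = bP (σ γ i))
    (hσ1 : ∀ i, σ 1 i = i) (hσm : ∀ γ δ i, σ (γ * δ) i = σ γ (σ δ i))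
    (hF : ∀ H : Subgroup Γ, MyH1Vanishes F H)
    {c : Γ → (F.carrier →ₗ[ℤ] N)} (hc : MyCocycle F.ρ ρP c) :
    ∃ b : F.carrier →ₗ[ℤ] N, ∀ γ : Γ, ∀ m : F.carrier,
      c γ m = b m - ρP γ⁻¹ (b (F.ρ γ m)) := by
  classical
  have hσinv1 : ∀ γ i, σ γ (σ γ⁻¹ i) = i := fun γ i => by
    rw [← hσm, mul_inv_cancel, hσ1]
  have hσinv2 : ∀ γ i, σ γ⁻¹ (σ γ i) = i := fun γ i => by
    rw [← hσm, inv_mul_cancel, hσ1]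
  -- coordinates of the permutation action
  have hrepr : ∀ (γ : Γ) (x : N) (i : ι), bP.repr (ρP γ x) i = bP.repr x (σ γ⁻¹ i) := by
    intro γ x i
    have hiff : ∀ j, (σ γ j = i) ↔ (j = σ γ⁻¹ i) :=
      fun j => ⟨fun h => by rw [← h, hσinv2], fun h => by rw [h, hσinv1]⟩
    have hext : ((Finsupp.lapply i).comp ((bP.repr : N →ₗ[ℤ] (ι →₀ ℤ)).comp
        ((ρP γ : N →ₗ[ℤ] N)))) =
        ((Finsupp.lapply (σ γ⁻¹ i)).comp (bP.repr : N →ₗ[ℤ] (ι →₀ ℤ))) := by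
      refine Module.Basis.ext bP fun j => ?_
      simp only [LinearMap.coe_comp, Function.comp_apply, LinearEquiv.coe_coe,
        Finsupp.lapply_apply, hσ, Module.Basis.repr_self]
      rw [Finsupp.single_apply, Finsupp.single_apply]
      simp only [hiff]
    exact LinearMap.congr_fun hext x
  -- orbit bookkeeping
  let st : Setoid ι :=
    ⟨fun i j => ∃ γ, σ γ i = j,
      ⟨fun i => ⟨1, hσ1 i⟩,
        fun {i j} h => by obtain ⟨γ, hγ⟩ := h; exact ⟨γ⁻¹, by rw [← hγ, hσinv2]⟩,
        fun {i j k} h h' => by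
          obtain ⟨γ, hγ⟩ := h; obtain ⟨δ, hδ⟩ := h'
          exact ⟨δ * γ, by rw [hσm, hγ, hδ]⟩⟩⟩
  let r : ι → ι := fun i => (Quotient.mk st i).out
  have hr_orbit : ∀ i, ∃ γ, σ γ (r i) = i := fun i =>
    Quotient.exact (Quotient.out_eq (Quotient.mk st i))
  have hr_inv : ∀ γ i, r (σ γ i) = r i := by
    intro γ i
    show (Quotient.mk st (σ γ i)).out = (Quotient.mk st i).out
    congr 1
    exact Quotient.sound ⟨γ⁻¹, hσinv2 γ i⟩
  let g : ι → Γ := fun i => (hr_orbit i).choose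
  have hg : ∀ i, σ (g i) (r i) = i := fun i => (hr_orbit i).choose_spec
  -- stabilizer subgroups
  let St : ι → Subgroup Γ := fun i =>
    { carrier := {γ | σ γ i = i}
      one_mem' := hσ1 i
      mul_mem' := fun {a b} ha hb => by
        show σ (a * b) i = i
        rw [hσm]
        show σ a (σ b i) = i
        rw [show σ b i = i from hb]
        exact ha
      inv_mem' := fun {a} ha => by
        show σ a⁻¹ i = i
        have h2 := hσinv2 a i
        rw [show σ a i = i from ha] at h2
        exact h2 }
  -- components of the cocycle
  let ci : ι → Γ → (F.carrier →ₗ[ℤ] ℤ) := fun i γ =>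
    (Finsupp.lapply i).comp ((bP.repr : N →ₗ[ℤ] (ι →₀ ℤ)).comp (c γ))
  have hci : ∀ i γ m, ci i γ m = bP.repr (c γ m) i := fun i γ m => rfl
  have hlaw : ∀ γ δ i m, ci i (γ * δ) m = ci (σ δ i) γ (F.ρ δ m) + ci i δ m := by
    intro γ δ i m
    rw [hci, hci, hci, hc γ δ m, map_add, Finsupp.add_apply, hrepr, inv_inv]
  -- stabilizer-restricted cocycles are coboundaries
  have hψ : ∀ i : ι, ∃ ψ : F.carrier →ₗ[ℤ] ℤ,
      ∀ h : (St i), ci i (h : Γ) = ψ.comp (F.ρ (h : Γ)) - ψ := by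
    intro i
    refine hF (St i) (fun h => ci i (h : Γ)) ?_
    intro a b
    refine LinearMap.ext fun m => ?_
    have hl := hlaw (a : Γ) (b : Γ) i m
    rw [show σ (b : Γ) i = i from b.2] at hl
    simpa using hl
  choose Ψ hΨ using hψ
  -- the global coboundary function
  let φ : ι → (F.carrier →ₗ[ℤ] ℤ) := fun i =>
    (-(Ψ (r i)) - ci (r i) (g i)).comp (F.ρ (g i)⁻¹)
  have hφ : ∀ i m, φ i m = -(Ψ (r i)) (F.ρ (g i)⁻¹ m) - ci (r i) (g i) (F.ρ (g i)⁻¹ m) := by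
    intro i m; rfl
  have main : ∀ γ i m, ci i γ m = φ i m - φ (σ γ i) (F.ρ γ m) := by
    intro γ i m₀
    set j := σ γ i with hj
    have hrj : r j = r i := hr_inv γ i
    have hggi : σ (g i) (r i) = i := hg i
    have hggj : σ (g j) (r i) = j := by rw [← hrj]; exact hg j
    set h₀ : Γ := (g j)⁻¹ * γ * (g i) with hh₀
    have hmem : σ h₀ (r i) = r i := by
      rw [hh₀, hσm, hσm, hggi, ← hj]
      have h2 := hσinv2 (g j) (r i)
      rw [hggj] at h2
      exact h2
    set x := F.ρ (g i)⁻¹ m₀ with hxdef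
    set y := F.ρ ((g j)⁻¹ * γ) m₀ with hydef
    have hx1 : F.ρ (g i) x = m₀ := by
      rw [hxdef, ← Module.End.mul_apply, ← map_mul, mul_inv_cancel, map_one,
        Module.End.one_apply]
    have hy1 : F.ρ h₀ x = y := by
      rw [hxdef, hydef, ← Module.End.mul_apply, ← map_mul, hh₀]
      congr 2
      group
    have hy2 : F.ρ (g j)⁻¹ (F.ρ γ m₀) = y := by
      rw [hydef, ← Module.End.mul_apply, ← map_mul]
    have heq : γ * (g i) = (g j) * h₀ := by rw [hh₀]; group
    have eq2 : ci (r i) (γ * (g i)) x = ci i γ m₀ + ci (r i) (g i) x := by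
      rw [hlaw γ (g i) (r i) x, hggi, hx1]
    have eq1 : ci (r i) ((g j) * h₀) x = ci (r i) (g j) y + (Ψ (r i) y - Ψ (r i) x) := by
      rw [hlaw (g j) h₀ (r i) x, hmem, hy1]
      have hcb := LinearMap.congr_fun (hΨ (r i) ⟨h₀, hmem⟩) x
      simp only [LinearMap.sub_apply, LinearMap.coe_comp, Function.comp_apply] at hcb
      rw [hcb, hy1]
    have hφi : φ i m₀ = -(Ψ (r i)) x - ci (r i) (g i) x := by rw [hφ]
    have hφj : φ j (F.ρ γ m₀) = -(Ψ (r i)) y - ci (r i) (g j) y := by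
      rw [hφ, hrj, hy2]
    rw [heq] at eq2
    rw [eq1] at eq2
    have : ci i γ m₀ = ci (r i) (g j) y + Ψ (r i) y - Ψ (r i) x - ci (r i) (g i) x := by
      linarith
    rw [this, hφi, hφj]
    ring
  -- assemble the coboundary
  haveI : Fintype ι := Fintype.ofFinite ι
  let b : F.carrier →ₗ[ℤ] N := ∑ i : ι, (LinearMap.toSpanSingleton ℤ N (bP i)).comp (φ i)
  have hbcoord : ∀ m i, bP.repr (b m) i = φ i m := by
    intro m i
    show bP.repr ((∑ j : ι, (LinearMap.toSpanSingleton ℤ N (bP j)).comp (φ j)) m) i = φ i m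
    rw [LinearMap.sum_apply, map_sum, Finsupp.finset_sum_apply]
    have hterm : ∀ j : ι, bP.repr (((LinearMap.toSpanSingleton ℤ N (bP j)).comp (φ j)) m) i
        = if j = i then φ j m else 0 := by
      intro j
      rw [LinearMap.comp_apply, LinearMap.toSpanSingleton_apply,
        LinearEquiv.map_smul, Finsupp.smul_apply, Module.Basis.repr_self, Finsupp.single_apply]
      by_cases h : j = i <;> simp [h]
    rw [Finset.sum_congr rfl (fun j _ => hterm j), Finset.sum_ite_eq' Finset.univ i
      (fun j => φ j m)]
    simp
  refine ⟨b, fun γ m => ?_⟩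
  refine bP.ext_elem fun i => ?_
  rw [map_sub, Finsupp.sub_apply, hbcoord, hrepr, inv_inv, hbcoord]
  exact main γ i m

end Shapiro

/-- A Γ-lattice `F` is flasque if and only if
`Ext¹_Γ(F, P) = 0` for every permutation Γ-lattice `P`. -/
theorem flasque_iff_ext1_perm_vanishes
    {Γ : Type} [Group Γ] [Finite Γ] (F : GammaLattice Γ) :
    F.IsFlasque ↔
      ∀ P : GammaLattice Γ, P.IsPermutation → Ext1Vanishes F.ρ P.ρ := by
  classical
  constructor
  · -- flasque ⟹ Ext¹ vanishes
    intro hfl P hperm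
    obtain ⟨ι, bP, hb⟩ := hperm
    haveI := P.finite
    haveI := F.free
    haveI : Finite ι := Module.Finite.finite_basis bP
    let σ : Γ → ι → ι := fun γ i => (hb γ i).choose
    have hσ : ∀ γ i, P.ρ γ (bP i) = bP (σ γ i) := fun γ i => (hb γ i).choose_spec
    have hσ1 : ∀ i, σ 1 i = i := by
      intro i
      apply bP.injective
      rw [← hσ 1 i, map_one, Module.End.one_apply]
    have hσm : ∀ γ δ i, σ (γ * δ) i = σ γ (σ δ i) := by
      intro γ δ i
      apply bP.injective
      rw [← hσ (γ * δ) i, ← hσ γ (σ δ i), ← hσ δ i, ← Module.End.mul_apply, ← map_mul]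
    refine ext1_of_coboundary ?_ ?_
    · exact Module.Projective.of_free
    · intro c hc
      exact shapiro_forward F P.ρ bP σ hσ hσ1 hσm
        ((myH1Vanishes_iff_flasque F).mp hfl) hc
  · -- Ext¹ vanishes ⟹ flasque
    intro hext
    refine (myH1Vanishes_iff_flasque F).mpr fun H u hu => ?_
    haveI : Fintype (Γ ⧸ H) := Fintype.ofFinite _
    -- the permutation lattice on the cosets Γ/H
    let ρQ : Representation ℤ Γ ((Γ ⧸ H) →₀ ℤ) :=
      { toFun := fun g => Finsupp.lmapDomain ℤ ℤ (fun x : Γ ⧸ H => g • x)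
        map_one' := by ext; simp
        map_mul' := fun x y => by ext; simp [mul_smul] }
    have hρQs : ∀ (g : Γ) (i : Γ ⧸ H) (r : ℤ),
        ρQ g (Finsupp.single i r) = Finsupp.single (g • i) r := fun g i r => by
      show Finsupp.mapDomain _ _ = _
      rw [Finsupp.mapDomain_single]
    have hρQ : ∀ (g : Γ) (f : (Γ ⧸ H) →₀ ℤ) (i : Γ ⧸ H), ρQ g f i = f (g⁻¹ • i) := by
      intro g f i
      show Finsupp.mapDomain (fun x : Γ ⧸ H => g • x) f i = _
      conv_lhs => rw [show i = g • (g⁻¹ • i) by rw [smul_inv_smul]]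
      exact Finsupp.mapDomain_apply (MulAction.injective g) f _
    let P : GammaLattice Γ :=
      { carrier := (Γ ⧸ H) →₀ ℤ
        ρ := ρQ
        free := inferInstance
        finite := Module.Finite.equiv (Finsupp.linearEquivFunOnFinite ℤ ℤ (Γ ⧸ H)).symm }
    have hP : P.IsPermutation := by
      refine ⟨Γ ⧸ H, Finsupp.basisSingleOne, fun γ i => ⟨γ • i, ?_⟩⟩
      show ρQ γ (Finsupp.basisSingleOne i) =
        Finsupp.basisSingleOne (γ • i)
      have h1 : (Finsupp.basisSingleOne : Module.Basis (Γ ⧸ H) ℤ ((Γ ⧸ H) →₀ ℤ)) i =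
          Finsupp.single i 1 := by
        rw [show ⇑(Finsupp.basisSingleOne : Module.Basis (Γ ⧸ H) ℤ ((Γ ⧸ H) →₀ ℤ)) =
          fun i => Finsupp.single i (1 : ℤ) from Finsupp.coe_basisSingleOne]
      have h2 : (Finsupp.basisSingleOne : Module.Basis (Γ ⧸ H) ℤ ((Γ ⧸ H) →₀ ℤ)) (γ • i) =
          Finsupp.single (γ • i) 1 := by
        rw [show ⇑(Finsupp.basisSingleOne : Module.Basis (Γ ⧸ H) ℤ ((Γ ⧸ H) →₀ ℤ)) =
          fun i => Finsupp.single i (1 : ℤ) from Finsupp.coe_basisSingleOne]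
      rw [h1, h2, hρQs]
    -- coset representatives, normalized at the trivial coset
    let i₀ : Γ ⧸ H := QuotientGroup.mk 1
    let t : Γ ⧸ H → Γ := fun i => if i = i₀ then 1 else Quotient.out i
    have ht0 : t i₀ = 1 := if_pos rfl
    have ht : ∀ i, QuotientGroup.mk (t i) = i := by
      intro i
      by_cases h : i = i₀
      · rw [h, ht0]
      · simp only [t, if_neg h]
        exact Quotient.out_eq i
    have hsmul : ∀ (γ x : Γ), γ • (QuotientGroup.mk x : Γ ⧸ H) = QuotientGroup.mk (γ * x) :=
      fun γ x => MulAction.Quotient.smul_mk H γ x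
    have hw : ∀ (γ : Γ) (i : Γ ⧸ H), (t (γ • i))⁻¹ * γ * (t i) ∈ H := by
      intro γ i
      have h1 : QuotientGroup.mk (γ * t i) = γ • i := by rw [← hsmul, ht]
      have h2 : QuotientGroup.mk (t (γ • i)) = γ • i := ht _
      have := QuotientGroup.eq.mp (h2.trans h1.symm)
      rwa [← mul_assoc] at this
    let cw : Γ → (Γ ⧸ H) → H := fun γ i => ⟨(t (γ • i))⁻¹ * γ * (t i), hw γ i⟩
    let cij : (Γ ⧸ H) → Γ → (F.carrier →ₗ[ℤ] ℤ) := fun i γ =>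
      (u (cw γ i)).comp (F.ρ (t i)⁻¹)
    let cmap : Γ → (F.carrier →ₗ[ℤ] ((Γ ⧸ H) →₀ ℤ)) := fun γ =>
      ∑ i : Γ ⧸ H, (Finsupp.lsingle i).comp (cij i γ)
    have hcoord : ∀ (γ : Γ) (m : F.carrier) (i : Γ ⧸ H), (cmap γ m) i = cij i γ m := by
      intro γ m i
      show ((∑ j : Γ ⧸ H, (Finsupp.lsingle j).comp (cij j γ)) m) i = cij i γ m
      rw [LinearMap.sum_apply, Finsupp.finset_sum_apply]
      have hterm : ∀ j : Γ ⧸ H, (((Finsupp.lsingle j).comp (cij j γ)) m) i =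
          if j = i then cij j γ m else 0 := by
        intro j
        rw [LinearMap.comp_apply, Finsupp.lsingle_apply, Finsupp.single_apply]
      rw [Finset.sum_congr rfl (fun j _ => hterm j),
        Finset.sum_ite_eq' Finset.univ i (fun j => cij j γ m)]
      simp
    have hmc : MyCocycle F.ρ P.ρ cmap := by
      intro γ δ m
      refine Finsupp.ext fun i => ?_
      have hRHS : ((P.ρ δ⁻¹) (cmap γ (F.ρ δ m)) + cmap δ m) i =
          cij (δ • i) γ (F.ρ δ m) + cij i δ m := by
        rw [Finsupp.add_apply, hcoord]
        congr 1
        show (ρQ δ⁻¹ (cmap γ (F.ρ δ m))) i = _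
        rw [hρQ, inv_inv, hcoord]
      rw [hRHS, hcoord]
      -- now the induced-cocycle computation
      have hcweq : cw (γ * δ) i = (cw γ (δ • i)) * (cw δ i) := by
        refine Subtype.ext ?_
        show (t ((γ * δ) • i))⁻¹ * (γ * δ) * (t i) =
          ((t (γ • (δ • i)))⁻¹ * γ * (t (δ • i))) * ((t (δ • i))⁻¹ * δ * (t i))
        rw [mul_smul]
        group
      rw [show cij i (γ * δ) m = u (cw (γ * δ) i) (F.ρ (t i)⁻¹ m) from rfl, hcweq,
        hu (cw γ (δ • i)) (cw δ i)]
      have harg : F.ρ ((cw δ i : Γ)) (F.ρ (t i)⁻¹ m) = F.ρ (t (δ • i))⁻¹ (F.ρ δ m) := by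
        rw [← Module.End.mul_apply, ← map_mul, ← Module.End.mul_apply, ← map_mul]
        have hgrp : (cw δ i : Γ) * (t i)⁻¹ = (t (δ • i))⁻¹ * δ := by
          show (t (δ • i))⁻¹ * δ * (t i) * (t i)⁻¹ = (t (δ • i))⁻¹ * δ
          group
        rw [hgrp]
      show u (cw γ (δ • i)) (F.ρ ((cw δ i : Γ)) (F.ρ (t i)⁻¹ m)) +
        u (cw δ i) (F.ρ (t i)⁻¹ m) = _
      rw [harg]
      rfl
    obtain ⟨b, hbb⟩ := coboundary_of_ext1 (hext P hP) hmc
    let φ₀ : F.carrier →ₗ[ℤ] ℤ := (Finsupp.lapply i₀).comp b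
    refine ⟨-φ₀, fun h => ?_⟩
    refine LinearMap.ext fun m => ?_
    have hsi : (h : Γ) • i₀ = i₀ := by
      rw [hsmul, mul_one]
      exact (QuotientGroup.eq.mpr (by simp [h.2])).symm
    have hkey := hbb (h : Γ) m
    have hco := congrArg (fun (z : (Γ ⧸ H) →₀ ℤ) => z i₀) hkey
    change cmap (h : Γ) m i₀ = (b m) i₀ - (P.ρ ((h : Γ))⁻¹ (b (F.ρ (h : Γ) m))) i₀ at hco
    rw [hcoord] at hco
    have hc2 : (P.ρ ((h : Γ))⁻¹ (b (F.ρ (h : Γ) m))) i₀ = φ₀ (F.ρ (h : Γ) m) := by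
      show (ρQ ((h : Γ))⁻¹ (b (F.ρ (h : Γ) m))) i₀ = _
      rw [hρQ, inv_inv, hsi]
      rfl
    have hc1 : cij i₀ ((h : Γ)) m = u h m := by
      show u (cw (h : Γ) i₀) (F.ρ (t i₀)⁻¹ m) = u h m
      have hcwh : cw (h : Γ) i₀ = h := by
        refine Subtype.ext ?_
        show (t ((h : Γ) • i₀))⁻¹ * (h : Γ) * (t i₀) = (h : Γ)
        rw [hsi, ht0]
        group
      rw [hcwh, ht0]
      simp
    rw [hc1, hc2] at hco
    show u h m = (-φ₀) (F.ρ (h : Γ) m) - (-φ₀) m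
    simp only [LinearMap.neg_apply]
    rw [hco]
    have : (b m) i₀ = φ₀ m := rfl
    rw [this]
    ring
end

section
/- Let Γ be a finite group and F a Γ-lattice. Then F is flasque if and only if Ext^1_Γ(F, Q) = 0 for every invertible Γ-lattice Q. -/
variable {Γ : Type} [Group Γ]

lemma subsingleton_H1_iff {G : Type} [Group G] {M : Type} [AddCommGroup M] [Module ℤ M]
    (ρ : Representation ℤ G M) :
    Subsingleton (groupCohomology.H1 (Rep.of ρ)) ↔
      ∀ c : G → M, (∀ g h, c (g * h) = ρ g (c h) + c g) → ∃ m, ∀ g, c g = ρ g m - m := by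
  constructor
  · intro H c hc
    have hmem : c ∈ groupCohomology.cocycles₁ (Rep.of ρ) :=
      (groupCohomology.mem_cocycles₁_iff (A := Rep.of ρ) c).2 hc
    have h0 : groupCohomology.H1π (Rep.of ρ) ⟨c, hmem⟩ = 0 := Subsingleton.elim _ _
    obtain ⟨m, hm⟩ := (groupCohomology.H1π_eq_zero_iff _).1 h0
    refine ⟨m, fun g => ?_⟩
    have hg := congrFun hm g
    rw [groupCohomology.d₀₁_hom_apply] at hg
    exact hg.symm
  · intro H
    refine subsingleton_of_forall_eq 0 (fun x => ?_)
    induction x using groupCohomology.H1_induction_on with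
    | h x =>
      obtain ⟨m, hm⟩ := H x ((groupCohomology.mem_cocycles₁_iff (A := Rep.of ρ) x).1 x.2)
      refine (groupCohomology.H1π_eq_zero_iff _).2 ⟨m, funext fun g => ?_⟩
      rw [groupCohomology.d₀₁_hom_apply]
      exact (hm g).symm

section ExtTranslation

lemma rep_apply_inv_apply {M : Type} [AddCommGroup M] [Module ℤ M]
    (ρ : Representation ℤ Γ M) (g : Γ) (x : M) : ρ g (ρ g⁻¹ x) = x := by
  rw [← Module.End.mul_apply, ← map_mul, mul_inv_cancel, map_one, Module.End.one_apply]

lemma rep_inv_apply_apply {M : Type} [AddCommGroup M] [Module ℤ M]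
    (ρ : Representation ℤ Γ M) (g : Γ) (x : M) : ρ g⁻¹ (ρ g x) = x := by
  rw [← Module.End.mul_apply, ← map_mul, inv_mul_cancel, map_one, Module.End.one_apply]

lemma rep_mul_apply {M : Type} [AddCommGroup M] [Module ℤ M]
    (ρ : Representation ℤ Γ M) (g h : Γ) (x : M) : ρ (g * h) x = ρ g (ρ h x) := by
  rw [map_mul, Module.End.mul_apply]

variable {A B : Type} [AddCommGroup A] [Module ℤ A] [AddCommGroup B] [Module ℤ B]

/-- From cocycle-vanishing to `Ext1Vanishes`. -/
lemma ext1Vanishes_of_cocycles (ρA : Representation ℤ Γ A) (ρB : Representation ℤ Γ B)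
    [Module.Free ℤ A]
    (H : ∀ c : Γ → (A →ₗ[ℤ] B),
      (∀ g h, c (g * h) = (Representation.linHom ρA ρB) g (c h) + c g) →
      ∃ m, ∀ g, c g = (Representation.linHom ρA ρB) g m - m) :
    Ext1Vanishes ρA ρB := by
  intro E _ _ ρE ι π ⟨hι, hπ, hinj, hsurj, hrange⟩
  obtain ⟨s₀, hs₀⟩ := Module.projective_lifting_property π LinearMap.id hsurj
  have hs₀' : ∀ a, π (s₀ a) = a := fun a => congrArg (fun f => f a) hs₀
  letI : Module ℤ ↥(LinearMap.range ι) := (LinearMap.range ι).module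
  set u : Γ → (A →ₗ[ℤ] E) := fun γ => (ρE γ ∘ₗ s₀ ∘ₗ ρA γ⁻¹) - s₀ with hu
  have huapp : ∀ γ a, u γ a = ρE γ (s₀ (ρA γ⁻¹ a)) - s₀ a := fun γ a => rfl
  have humem : ∀ γ a, u γ a ∈ LinearMap.range ι := by
    intro γ a
    rw [hrange, LinearMap.mem_ker, huapp, map_sub, hπ γ (s₀ (ρA γ⁻¹ a)), hs₀',
      rep_apply_inv_apply, hs₀', sub_self]
  let e := LinearEquiv.ofInjective ι hinj
  set c : Γ → (A →ₗ[ℤ] B) :=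
    fun γ => e.symm.toLinearMap ∘ₗ ((u γ).codRestrict (LinearMap.range ι) (humem γ)) with hcdef
  have hιe : ∀ y : LinearMap.range ι, ι (e.symm y) = (y : E) := by
    intro y
    conv_rhs => rw [← e.apply_symm_apply y]
    exact (LinearEquiv.ofInjective_apply (f := ι) (h := hinj) _).symm
  have hιc : ∀ γ a, ι (c γ a) = u γ a := fun γ a => hιe _
  have hcoc : ∀ g h, c (g * h) = (Representation.linHom ρA ρB) g (c h) + c g := by
    intro g h
    apply LinearMap.ext; intro a
    apply hinj
    rw [Representation.linHom_apply]
    simp only [LinearMap.add_apply, map_add, LinearMap.coe_comp, Function.comp_apply]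
    rw [hι, hιc, hιc, hιc, huapp, huapp, huapp, mul_inv_rev, rep_mul_apply ρA,
      rep_mul_apply ρE, map_sub]
    abel
  obtain ⟨m, hm⟩ := H c hcoc
  refine ⟨s₀ - ι ∘ₗ m, ?_, ?_⟩
  · intro γ a
    have key := congrArg (fun f => f (ρA γ a)) (hm γ)
    simp only [Representation.linHom_apply, LinearMap.sub_apply, LinearMap.coe_comp,
      Function.comp_apply] at key ⊢
    rw [rep_inv_apply_apply] at key
    have h3 := congrArg ι key
    rw [hιc, huapp, rep_inv_apply_apply, map_sub, hι] at h3
    -- h3 : ρE γ (s₀ a) - s₀ (ρA γ a) = ρE γ (ι (m a)) - ι (m (ρA γ a))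
    rw [sub_eq_sub_iff_sub_eq_sub] at h3
    rw [map_sub]
    exact h3.symm
  · apply LinearMap.ext; intro a
    have hπι : ∀ b, π (ι b) = 0 := by
      intro b
      have : ι b ∈ LinearMap.ker π := by rw [← hrange]; exact ⟨b, rfl⟩
      exact this
    simp [map_sub, hs₀', hπι]

end ExtTranslation

/-- From `Ext1Vanishes` to cocycle-vanishing. -/
lemma cocycles_of_ext1Vanishes {A B : Type} [AddCommGroup A] [Module ℤ A]
    [AddCommGroup B] [Module ℤ B]
    (ρA : Representation ℤ Γ A) (ρB : Representation ℤ Γ B)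
    (hext : Ext1Vanishes ρA ρB)
    (c : Γ → (A →ₗ[ℤ] B))
    (hc : ∀ g h, c (g * h) = (Representation.linHom ρA ρB) g (c h) + c g) :
    ∃ m, ∀ g, c g = (Representation.linHom ρA ρB) g m - m := by
  letI : Module ℤ (B × A) := Prod.instModule
  have hc' : ∀ g h (a : A), c (g * h) a = ρB g (c h (ρA g⁻¹ a)) + c g a := by
    intro g h a
    rw [hc g h]
    simp [Representation.linHom_apply]
  have hc1 : ∀ a, c 1 a = 0 := by
    intro a
    have h := hc' 1 1 a
    rw [mul_one, inv_one, map_one, Module.End.one_apply, map_one, Module.End.one_apply] at h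
    exact left_eq_add.1 h
  -- twisted extension E = B × A
  let ρE : Representation ℤ Γ (B × A) :=
    { toFun := fun γ => LinearMap.prod
        ((ρB γ) ∘ₗ (LinearMap.fst ℤ B A) + (c γ) ∘ₗ (ρA γ) ∘ₗ (LinearMap.snd ℤ B A))
        ((ρA γ) ∘ₗ (LinearMap.snd ℤ B A))
      map_one' := by
        apply LinearMap.ext; rintro ⟨b, a⟩
        simp [hc1, LinearMap.prod_apply]
      map_mul' := by
        intro g h
        apply LinearMap.ext; rintro ⟨b, a⟩
        simp only [LinearMap.prod_apply, LinearMap.add_apply, LinearMap.coe_comp,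
          Function.comp_apply, LinearMap.fst_apply, LinearMap.snd_apply, Module.End.mul_apply,
          Function.prod, Prod.mk.injEq]
        constructor
        · rw [hc' g h, rep_mul_apply ρB, rep_mul_apply ρA, rep_inv_apply_apply]
          rw [map_add]
          abel
        · rw [rep_mul_apply ρA] }
  have hρE : ∀ γ b a, ρE γ (b, a) = (ρB γ b + c γ (ρA γ a), ρA γ a) := fun γ b a => rfl
  obtain ⟨s, hs_eq, hs_sec⟩ := hext (B × A) ρE (LinearMap.inl ℤ B A) (LinearMap.snd ℤ B A)
    ⟨by intro γ b; simp [hρE], by intro γ ba; rfl,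
     LinearMap.inl_injective, LinearMap.snd_surjective,
     LinearMap.range_inl ℤ B A⟩
  -- s a = (t a, a)
  let t : A →ₗ[ℤ] B := (LinearMap.fst ℤ B A) ∘ₗ s
  have hsnd : ∀ a, (s a).2 = a := fun a => congrArg (fun f => f a) hs_sec
  have hs : ∀ a, s a = (t a, a) := by
    intro a
    ext
    · rfl
    · exact hsnd a
  refine ⟨-t, ?_⟩
  intro γ
  apply LinearMap.ext; intro v
  have key := hs_eq γ (ρA γ⁻¹ v)
  rw [hs, hs, hρE, rep_apply_inv_apply] at key
  have key1 := congrArg Prod.fst key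
  simp only at key1
  -- key1 : t (ρA γ v)?? check orientation
  simp only [Representation.linHom_apply, LinearMap.sub_apply, LinearMap.neg_apply,
    LinearMap.coe_comp, Function.comp_apply, map_neg]
  rw [sub_neg_eq_add, neg_add_eq_sub, eq_sub_iff_add_eq, add_comm, ← key1]

/-- Helper: dual representation applied pointwise. -/
lemma dual_apply' {M : Type} [AddCommGroup M] [Module ℤ M]
    (ρ : Representation ℤ Γ M) (g : Γ) (ψ : Module.Dual ℤ M) (v : M) :
    (ρ.dual g) ψ v = ψ (ρ g⁻¹ v) := rfl

/-- Core lemma: if `F` is flasque and `N` is a permutation lattice, then every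
conjugation 1-cocycle valued in `Hom(F, N)` is a coboundary. -/
lemma flasque_perm {F : GammaLattice Γ} (hF : F.IsFlasque)
    {N : GammaLattice Γ} (hN : N.IsPermutation)
    (c : Γ → (F.carrier →ₗ[ℤ] N.carrier))
    (hc : ∀ g h, c (g * h) = (Representation.linHom F.ρ N.ρ) g (c h) + c g) :
    ∃ m, ∀ g, c g = (Representation.linHom F.ρ N.ρ) g m - m := by
  classical
  obtain ⟨ι, b, hb⟩ := hN
  choose σ hσ using hb
  have binj : Function.Injective b := b.injective
  have hσ1 : ∀ i, σ 1 i = i := fun i => binj (by rw [← hσ 1 i, map_one, Module.End.one_apply])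
  have hσmul : ∀ γ δ i, σ (γ * δ) i = σ γ (σ δ i) := fun γ δ i =>
    binj (by rw [← hσ, ← hσ, ← hσ, rep_mul_apply])
  have hσA : ∀ γ i, σ γ (σ γ⁻¹ i) = i := fun γ i => by
    rw [← hσmul, mul_inv_cancel, hσ1]
  have hσB : ∀ γ i, σ γ⁻¹ (σ γ i) = i := fun γ i => by
    rw [← hσmul, inv_mul_cancel, hσ1]
  haveI := N.finite
  haveI := F.free
  haveI := F.finite
  haveI : Finite ι := Module.Finite.finite_basis b
  haveI : Fintype ι := Fintype.ofFinite ι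
  -- coordinate functionals intertwine the action
  have hcoord : ∀ (γ : Γ) (i : ι) (w : N.carrier),
      b.coord i (N.ρ γ w) = b.coord (σ γ⁻¹ i) w := by
    intro γ i w
    have key : (b.coord i ∘ₗ N.ρ γ) = b.coord (σ γ⁻¹ i) := by
      apply b.ext
      intro j
      simp only [LinearMap.coe_comp, Function.comp_apply, hσ, Module.Basis.coord_apply,
        Module.Basis.repr_self]
      rw [Finsupp.single_apply, Finsupp.single_apply]
      by_cases hji : j = σ γ⁻¹ i
      · rw [if_pos hji, if_pos (by rw [hji, hσA])]
      · rw [if_neg hji, if_neg (fun hcont => hji (by rw [← hcont, hσB]))]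
    exact LinearMap.congr_fun key w
  -- orbit setoid and representatives
  let st : Setoid ι := ⟨fun i j => ∃ γ, σ γ i = j,
    ⟨fun i => ⟨1, hσ1 i⟩, fun ⟨γ, h⟩ => ⟨γ⁻¹, by rw [← h, hσB]⟩,
     fun ⟨γ, h⟩ ⟨δ, h'⟩ => ⟨δ * γ, by rw [hσmul, h, h']⟩⟩⟩
  let r : ι → ι := fun i => (Quotient.mk st i).out
  have hrorb : ∀ i, ∃ γ, σ γ (r i) = i := fun i =>
    Quotient.exact ((Quotient.mk st i).out_eq)
  have hrσ : ∀ γ i, r (σ γ i) = r i := fun γ i =>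
    congrArg Quotient.out (Quotient.sound (⟨γ⁻¹, hσB γ i⟩ : st.r (σ γ i) i))
  choose x hx using hrorb
  -- stabilizer subgroups
  let stab : ι → Subgroup Γ := fun i₀ =>
    { carrier := {γ | σ γ i₀ = i₀}
      one_mem' := hσ1 i₀
      mul_mem' := fun {a₁ a₂} ha hb' => by
        simp only [Set.mem_setOf_eq] at *
        rw [hσmul, hb', ha]
      inv_mem' := fun {a} ha => by
        simp only [Set.mem_setOf_eq] at *
        conv_lhs => rw [← ha]
        rw [← hσmul, inv_mul_cancel, hσ1] }
  -- flasqueness supplies coboundaries over each stabilizer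
  have flas : ∀ (i₀ : ι) (c₀ : stab i₀ → Module.Dual ℤ F.carrier),
      (∀ g h : stab i₀, c₀ (g * h) = (F.ρ.dual (g : Γ)) (c₀ h) + c₀ g) →
      ∃ m, ∀ g : stab i₀, c₀ g = F.ρ.dual (g : Γ) m - m := by
    intro i₀
    exact (subsingleton_H1_iff (F.ρ.dual.comp (stab i₀).subtype)).1 (hF (stab i₀))
  -- coordinates of the cocycle
  let cc : Γ → ι → Module.Dual ℤ F.carrier := fun γ i => (b.coord i) ∘ₗ (c γ)
  have hccoc : ∀ γ δ i, cc (γ * δ) i = cc γ i + (F.ρ.dual γ) (cc δ (σ γ⁻¹ i)) := by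
    intro γ δ i
    apply LinearMap.ext; intro v
    have h := congrArg (fun f => b.coord i (f v)) (hc γ δ)
    simp only [Representation.linHom_apply, LinearMap.add_apply, LinearMap.coe_comp,
      Function.comp_apply, map_add] at h
    rw [hcoord] at h
    simp only [cc, LinearMap.add_apply, LinearMap.coe_comp, Function.comp_apply,
      dual_apply']
    rw [h]
    abel
  -- apply flasqueness at each orbit representative
  have hm : ∀ i₀ : ι, ∃ m : Module.Dual ℤ F.carrier,
      ∀ g : stab i₀, cc (g : Γ) i₀ = F.ρ.dual (g : Γ) m - m := by
    intro i₀
    apply flas i₀ (fun g => cc (g : Γ) i₀)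
    intro g h
    have hgh : ((g * h : stab i₀) : Γ) = (g : Γ) * (h : Γ) := rfl
    rw [hgh]
    have key := hccoc (g : Γ) (h : Γ) i₀
    have hfix : σ ((g : Γ))⁻¹ i₀ = i₀ := (stab i₀).inv_mem g.2
    rw [hfix] at key
    rw [key]
    abel
  choose m₀ hm₀ using hm
  -- the primitive
  let φc : ι → Module.Dual ℤ F.carrier := fun k => F.ρ.dual (x k) (m₀ (r k)) - cc (x k) k
  have hkey : ∀ γ i, cc γ i = F.ρ.dual γ (φc (σ γ⁻¹ i)) - φc i := by
    intro γ i
    set j := σ γ⁻¹ i with hj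
    have hrj : r j = r i := hrσ γ⁻¹ i
    set hel := (x i)⁻¹ * γ * x j with hhel
    have hσγj : σ γ j = i := hσA γ i
    have hσxi : σ (x i)⁻¹ i = r i := by
      have h' := hσB (x i) (r i)
      rwa [hx i] at h'
    have hxjri : σ (x j) (r i) = j := by rw [← hrj]; exact hx j
    have hhel_mem : hel ∈ stab (r i) := by
      show σ hel (r i) = r i
      rw [hhel, hσmul, hxjri, hσmul, hσγj, hσxi]
    have h2 : γ * x j = x i * hel := by rw [hhel]; group
    have h1 : cc (γ * x j) i = cc γ i + F.ρ.dual γ (cc (x j) j) := by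
      rw [hccoc, ← hj]
    have h3 : cc (x i * hel) i = cc (x i) i + F.ρ.dual (x i) (cc hel (r i)) := by
      rw [hccoc, hσxi]
    have h4 : cc hel (r i) = F.ρ.dual hel (m₀ (r i)) - m₀ (r i) :=
      hm₀ (r i) ⟨hel, hhel_mem⟩
    rw [h2, h3, h4, map_sub] at h1
    have h5 : F.ρ.dual (x i) (F.ρ.dual hel (m₀ (r i)))
        = F.ρ.dual γ (F.ρ.dual (x j) (m₀ (r i))) := by
      rw [← rep_mul_apply, ← rep_mul_apply, ← h2]
    rw [h5] at h1
    have hC := eq_sub_of_add_eq h1.symm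
    rw [hC]
    show _ = F.ρ.dual γ (F.ρ.dual (x j) (m₀ (r j)) - cc (x j) j)
      - (F.ρ.dual (x i) (m₀ (r i)) - cc (x i) i)
    rw [hrj, map_sub]
    abel
  -- assemble the primitive as a map into N
  haveI := @IsScalarTower.mk ℤ ℤ N.carrier
      (@SMulZeroClass.toSMul ℤ ℤ _ (@DistribSMul.toSMulZeroClass ℤ ℤ _
        (@DistribMulAction.toDistribSMul ℤ ℤ _ _ (@Module.toDistribMulAction ℤ ℤ _ _
          (Semiring.toModule)))))
      (@SMulZeroClass.toSMul ℤ N.carrier _ (@DistribSMul.toSMulZeroClass ℤ N.carrier _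
        (@DistribMulAction.toDistribSMul ℤ N.carrier _ _ (@Module.toDistribMulAction ℤ N.carrier _ _
          N.isModule))))
      (@SMulZeroClass.toSMul ℤ N.carrier _ (@DistribSMul.toSMulZeroClass ℤ N.carrier _
        (@DistribMulAction.toDistribSMul ℤ N.carrier _ _ (@Module.toDistribMulAction ℤ N.carrier _ _
          N.isModule))))
      (fun a b m => N.isModule.toDistribMulAction.toMulAction.mul_smul a b m)
  refine ⟨∑ k, (φc k).smulRight (b k), ?_⟩
  intro γ
  apply LinearMap.ext; intro v
  apply b.ext_elem
  intro i
  have hφ : ∀ (i' : ι) (w : F.carrier),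
      b.coord i' ((∑ k, (φc k).smulRight (b k)) w) = φc i' w := by
    intro i' w
    rw [LinearMap.sum_apply, map_sum]
    rw [Finset.sum_eq_single i']
    · simp [Module.Basis.coord_apply]
    · intro k _ hk
      simp [Module.Basis.coord_apply, Finsupp.single_apply, hk]
    · intro h; exact absurd (Finset.mem_univ i') h
  have hL : b.repr ((c γ) v) i = cc γ i v := (Module.Basis.coord_apply b i _).symm
  have hR : b.repr (((Representation.linHom F.ρ N.ρ) γ (∑ k, (φc k).smulRight (b k))
      - ∑ k, (φc k).smulRight (b k)) v) i
      = F.ρ.dual γ (φc (σ γ⁻¹ i)) v - φc i v := by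
    rw [LinearMap.sub_apply, map_sub, Finsupp.sub_apply]
    rw [Representation.linHom_apply]
    simp only [LinearMap.coe_comp, Function.comp_apply]
    rw [← Module.Basis.coord_apply, ← Module.Basis.coord_apply, hcoord, hφ, hφ, dual_apply']
  rw [hL, hR, hkey]
  rw [LinearMap.sub_apply]

/-- If `Ext¹(F, Q) = 0` for all invertible `Q`, then `F` is flasque. -/
lemma flasque_of_ext1 {Γ : Type} [Group Γ] [Finite Γ] (F : GammaLattice Γ)
    (hext : ∀ Q : GammaLattice Γ, Q.IsInvertible → Ext1Vanishes F.ρ Q.ρ) :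
    F.IsFlasque := by
  classical
  haveI := F.free
  intro Γ'
  apply (subsingleton_H1_iff (F.ρ.dual.comp Γ'.subtype)).2
  intro c' hc'
  haveI : Fintype (Γ ⧸ Γ') := Fintype.ofFinite _
  -- the permutation representation on Γ ⧸ Γ'
  let ρN : Representation ℤ Γ ((Γ ⧸ Γ') → ℤ) :=
    { toFun := fun γ => LinearMap.funLeft ℤ ℤ (fun w => γ⁻¹ • w)
      map_one' := by
        apply LinearMap.ext; intro f; funext w
        simp [LinearMap.funLeft_apply]
      map_mul' := by
        intro g h
        apply LinearMap.ext; intro f; funext w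
        simp [LinearMap.funLeft_apply, Module.End.mul_apply, mul_smul, mul_inv_rev] }
  have hρN : ∀ γ (f : (Γ ⧸ Γ') → ℤ) w, ρN γ f w = f (γ⁻¹ • w) := fun γ f w => rfl
  let N : GammaLattice Γ :=
    { carrier := (Γ ⧸ Γ') → ℤ, ρ := ρN, free := inferInstance, finite := inferInstance }
  have hNperm : N.IsPermutation := by
    refine ⟨Γ ⧸ Γ', Pi.basisFun ℤ (Γ ⧸ Γ'), ?_⟩
    intro γ u
    refine ⟨γ • u, ?_⟩
    show ρN γ (Pi.basisFun ℤ (Γ ⧸ Γ') u) = Pi.basisFun ℤ (Γ ⧸ Γ') (γ • u)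
    funext w
    rw [hρN, Pi.basisFun_apply, Pi.basisFun_apply]
    rw [Pi.single_apply, Pi.single_apply]
    by_cases h : γ⁻¹ • w = u
    · rw [if_pos h, if_pos (by rw [← h, smul_inv_smul])]
    · rw [if_neg h, if_neg (fun hcon => h (by rw [hcon, inv_smul_smul]))]
  have hNinv : N.IsInvertible :=
    ⟨N, hNperm, LinearMap.id, LinearMap.id, fun γ m => rfl, fun γ m => rfl,
      LinearMap.id_comp _⟩
  have hExt : Ext1Vanishes F.ρ ρN := hext N hNinv
  -- coset representatives
  let i₀ : Γ ⧸ Γ' := ((1 : Γ) : Γ ⧸ Γ')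
  let x : (Γ ⧸ Γ') → Γ := fun w => if w = i₀ then 1 else Quotient.out w
  have hx : ∀ w, ((x w : Γ) : Γ ⧸ Γ') = w := by
    intro w
    show (((if w = i₀ then 1 else Quotient.out w) : Γ) : Γ ⧸ Γ') = w
    split_ifs with h
    · rw [h]
    · exact QuotientGroup.out_eq' w
  have hx₀ : x i₀ = 1 := if_pos rfl
  have hchain : ∀ (γ : Γ) w, (((x w)⁻¹ * γ * x (γ⁻¹ • w) : Γ) : Γ ⧸ Γ') = i₀ := by
    intro γ w
    calc (((x w)⁻¹ * γ * x (γ⁻¹ • w) : Γ) : Γ ⧸ Γ')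
        = ((x w)⁻¹ * γ) • ((x (γ⁻¹ • w) : Γ) : Γ ⧸ Γ') := rfl
      _ = ((x w)⁻¹ * γ) • (γ⁻¹ • w) := by rw [hx]
      _ = (x w)⁻¹ • (γ • (γ⁻¹ • w)) := by rw [mul_smul]
      _ = (x w)⁻¹ • w := by rw [smul_inv_smul]
      _ = (x w)⁻¹ • (((x w : Γ) : Γ ⧸ Γ')) := by rw [hx]
      _ = (((x w)⁻¹ * (x w) : Γ) : Γ ⧸ Γ') := rfl
      _ = i₀ := by rw [inv_mul_cancel]
  have hmem : ∀ (γ : Γ) w, (x w)⁻¹ * γ * x (γ⁻¹ • w) ∈ Γ' := by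
    intro γ w
    have h1 : ((1 : Γ) : Γ ⧸ Γ') = (((x w)⁻¹ * γ * x (γ⁻¹ • w) : Γ) : Γ ⧸ Γ') :=
      (hchain γ w).symm
    have h2 := QuotientGroup.eq.1 h1
    simpa using h2
  -- the induced cocycle valued in Hom(F, N)
  let hh : Γ → (Γ ⧸ Γ') → Γ' := fun γ w => ⟨(x w)⁻¹ * γ * x (γ⁻¹ • w), hmem γ w⟩
  let cmap : Γ → (F.carrier →ₗ[ℤ] ((Γ ⧸ Γ') → ℤ)) :=
    fun γ => LinearMap.pi (fun w => F.ρ.dual (x w) (c' (hh γ w)))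
  have hcmap : ∀ γ (v : F.carrier) w, cmap γ v w = F.ρ.dual (x w) (c' (hh γ w)) v :=
    fun γ v w => rfl
  have hcoc : ∀ g h, cmap (g * h) = (Representation.linHom F.ρ ρN) g (cmap h) + cmap g := by
    intro γ δ
    apply LinearMap.ext; intro v
    funext w
    have hmulsmul : (γ * δ)⁻¹ • w = δ⁻¹ • (γ⁻¹ • w) := by rw [mul_inv_rev, mul_smul]
    have hhprod : hh (γ * δ) w = hh γ w * hh δ (γ⁻¹ • w) := by
      apply Subtype.ext
      show (x w)⁻¹ * (γ * δ) * x ((γ * δ)⁻¹ • w)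
        = ((x w)⁻¹ * γ * x (γ⁻¹ • w)) * ((x (γ⁻¹ • w))⁻¹ * δ * x (δ⁻¹ • (γ⁻¹ • w)))
      rw [hmulsmul]; group
    have happ := congrArg (fun ψ => (F.ρ.dual (x w) ψ) v) (hc' (hh γ w) (hh δ (γ⁻¹ • w)))
    simp only [map_add, LinearMap.add_apply] at happ
    have hL : cmap (γ * δ) v w
        = (F.ρ.dual (x w)) ((F.ρ.dual ((hh γ w : Γ))) (c' (hh δ (γ⁻¹ • w)))) v
          + (F.ρ.dual (x w)) (c' (hh γ w)) v := by
      rw [hcmap, hhprod]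
      exact happ
    have hcomm : (F.ρ.dual (x w)) ((F.ρ.dual ((hh γ w : Γ))) (c' (hh δ (γ⁻¹ • w)))) v
        = (F.ρ.dual γ) ((F.ρ.dual (x (γ⁻¹ • w))) (c' (hh δ (γ⁻¹ • w)))) v := by
      rw [← rep_mul_apply, ← rep_mul_apply]
      have hxh : x w * ((hh γ w : Γ)) = γ * x (γ⁻¹ • w) := by
        show x w * ((x w)⁻¹ * γ * x (γ⁻¹ • w)) = γ * x (γ⁻¹ • w)
        group
      rw [hxh]
    rw [hL, hcomm]
    show (F.ρ.dual γ) ((F.ρ.dual (x (γ⁻¹ • w))) (c' (hh δ (γ⁻¹ • w)))) v + cmap γ v w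
      = ((Representation.linHom F.ρ ρN) γ (cmap δ) + cmap γ) v w
    simp only [LinearMap.add_apply, Pi.add_apply, Representation.linHom_apply,
      LinearMap.coe_comp, Function.comp_apply]
    rw [hρN, hcmap, dual_apply', hcmap]
  obtain ⟨φ, hφ⟩ := cocycles_of_ext1Vanishes F.ρ ρN hExt cmap hcoc
  refine ⟨(LinearMap.proj i₀) ∘ₗ φ, ?_⟩
  intro g
  apply LinearMap.ext; intro v
  -- compute the i₀-component of the coboundary identity at γ = ↑g
  have hg_i₀ : ((g : Γ))⁻¹ • i₀ = i₀ := by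
    show ((g : Γ))⁻¹ • (((1 : Γ) : Γ ⧸ Γ')) = (((1 : Γ) : Γ ⧸ Γ'))
    have h1 : ((g : Γ))⁻¹ • (((1 : Γ) : Γ ⧸ Γ')) = ((((g : Γ))⁻¹ * 1 : Γ) : Γ ⧸ Γ') := rfl
    rw [h1, mul_one]
    exact QuotientGroup.eq.2 (by simp [g.2])
  have hhg : hh (g : Γ) i₀ = g := by
    apply Subtype.ext
    show (x i₀)⁻¹ * (g : Γ) * x (((g : Γ))⁻¹ • i₀) = (g : Γ)
    rw [hg_i₀, hx₀]
    group
  have hkeyL : cmap (g : Γ) v i₀ = c' g v := by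
    rw [hcmap, hhg, hx₀, map_one, Module.End.one_apply]
  have hkeyR : (((Representation.linHom F.ρ ρN) (g : Γ) φ - φ) v) i₀
      = (LinearMap.proj i₀ ∘ₗ φ) (F.ρ ((g : Γ))⁻¹ v) - (LinearMap.proj i₀ ∘ₗ φ) v := by
    simp only [LinearMap.sub_apply, Pi.sub_apply, Representation.linHom_apply,
      LinearMap.coe_comp, Function.comp_apply]
    rw [hρN, hg_i₀]
    rfl
  calc c' g v = cmap (g : Γ) v i₀ := hkeyL.symm
    _ = (((Representation.linHom F.ρ ρN) (g : Γ) φ - φ) v) i₀ := by rw [hφ (g : Γ)]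
    _ = (LinearMap.proj i₀ ∘ₗ φ) (F.ρ ((g : Γ))⁻¹ v) - (LinearMap.proj i₀ ∘ₗ φ) v := hkeyR
    _ = (((F.ρ.dual.comp Γ'.subtype) g) (LinearMap.proj i₀ ∘ₗ φ)
        - LinearMap.proj i₀ ∘ₗ φ) v := rfl

/-- A Γ-lattice `F` is flasque if and only if
`Ext¹_Γ(F, Q) = 0` for every invertible Γ-lattice `Q`. -/
theorem flasque_iff_ext1_invertible_vanishes
    {Γ : Type} [Group Γ] [Finite Γ] (F : GammaLattice Γ) :
    F.IsFlasque ↔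
      ∀ Q : GammaLattice Γ, Q.IsInvertible → Ext1Vanishes F.ρ Q.ρ := by
  constructor
  · intro hF Q hQ
    obtain ⟨N, hNperm, i, p, hi, hp, hpi⟩ := hQ
    haveI := F.free
    apply ext1Vanishes_of_cocycles
    intro c hc
    let cN : Γ → (F.carrier →ₗ[ℤ] N.carrier) := fun γ => i ∘ₗ c γ
    have hcN : ∀ g h, cN (g * h) = (Representation.linHom F.ρ N.ρ) g (cN h) + cN g := by
      intro g h
      apply LinearMap.ext; intro v
      show i (c (g * h) v) = _
      rw [hc g h]
      simp only [Representation.linHom_apply, LinearMap.add_apply, LinearMap.coe_comp,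
        Function.comp_apply, map_add]
      rw [hi]
      rfl
    obtain ⟨mN, hmN⟩ := flasque_perm hF hNperm cN hcN
    refine ⟨p ∘ₗ mN, ?_⟩
    intro γ
    apply LinearMap.ext; intro v
    have h1 : p (cN γ v) = c γ v := LinearMap.congr_fun hpi (c γ v)
    calc c γ v = p (cN γ v) := h1.symm
      _ = p (((Representation.linHom F.ρ N.ρ) γ mN - mN) v) := by rw [hmN γ]
      _ = Q.ρ γ (p (mN (F.ρ γ⁻¹ v))) - p (mN v) := by
          simp only [LinearMap.sub_apply, Representation.linHom_apply, LinearMap.coe_comp,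
            Function.comp_apply, map_sub]
          rw [hp]
      _ = ((Representation.linHom F.ρ Q.ρ) γ (p ∘ₗ mN) - p ∘ₗ mN) v := by
          simp only [LinearMap.sub_apply, Representation.linHom_apply, LinearMap.coe_comp,
            Function.comp_apply]
  · exact fun h => flasque_of_ext1 F h
end

section
/- Let Γ be a finite group and M a Γ-lattice. Suppose 0 → C → P →^α M → 0 is a short exact sequence of Γ-lattices with C coflasque and P permutation (a coflasque resolution of the first type). Then for every invertible Γ-lattice P' and every ℤ[Γ]-module homomorphism f : P' → M there exists a ℤ[Γ]-module homomorphism g : P' → P with α ∘ g = f. -/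
variable {Γ : Type} [Group Γ]

open groupCohomology in
lemma cocycle_is_coboundary {G : Type} [Group G] {A : Type} [AddCommGroup A] [Module ℤ A]
    (ρ : Representation ℤ G A)
    (h : Subsingleton (groupCohomology.H1 (Rep.of ρ)))
    (c : G → A) (hc : ∀ g h : G, c (g * h) = ρ g (c h) + c g) :
    ∃ x : A, ∀ g : G, c g = ρ g x - x := by
  have hmem : c ∈ cocycles₁ (Rep.of ρ) :=
    (mem_cocycles₁_iff (A := Rep.of ρ) c).2 hc
  have hcb : c ∈ coboundaries₁ (Rep.of ρ) :=
    (H1π_eq_zero_iff (⟨c, hmem⟩ : cocycles₁ (Rep.of ρ))).1 (Subsingleton.elim _ _)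
  obtain ⟨x, hx⟩ := hcb
  exact ⟨x, fun g => by rw [← hx]; rfl⟩

lemma perm_lift {Γ : Type} [Group Γ]
    (C P M : GammaLattice Γ) (hC : C.IsCoflasque)
    (ι : C.carrier →ₗ[ℤ] P.carrier) (α : P.carrier →ₗ[ℤ] M.carrier)
    (hse : IsShortExactSeq C.ρ P.ρ M.ρ ι α)
    (N : GammaLattice Γ) (hN : N.IsPermutation)
    (f : N.carrier →ₗ[ℤ] M.carrier) (hf : IsEquivariantMap N.ρ M.ρ f) :
    ∃ g : N.carrier →ₗ[ℤ] P.carrier,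
      IsEquivariantMap N.ρ P.ρ g ∧ α.comp g = f := by
  classical
  obtain ⟨hι, hα, hιinj, hαsurj, hrk⟩ := hse
  obtain ⟨I, b, hb⟩ := hN
  choose act hact using hb
  have binj := b.injective
  have hact_one : ∀ i, act 1 i = i := fun i => binj (by
    rw [← hact 1 i, map_one, Module.End.one_apply])
  have hact_mul : ∀ γ δ i, act (γ * δ) i = act γ (act δ i) := fun γ δ i => binj (by
    rw [← hact, map_mul, Module.End.mul_apply, hact δ i, hact])
  have hact_inv : ∀ γ i, act γ⁻¹ (act γ i) = i := fun γ i => by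
    rw [← hact_mul, inv_mul_cancel, hact_one]
  let s : Setoid I := ⟨fun i j => ∃ γ, act γ i = j,
    ⟨fun i => ⟨1, hact_one i⟩,
     fun {i j} h => by obtain ⟨γ, hγ⟩ := h; exact ⟨γ⁻¹, by rw [← hγ, hact_inv]⟩,
     fun {i j k} h h' => by
       obtain ⟨γ, hγ⟩ := h; obtain ⟨δ, hδ⟩ := h'
       exact ⟨δ * γ, by rw [hact_mul, hγ, hδ]⟩⟩⟩
  let rep : I → I := fun i => (Quotient.mk s i).out
  have hrep : ∀ i, ∃ γ, act γ (rep i) = i := fun i => Quotient.mk_out (s := s) i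
  have hrep_eq : ∀ γ i, rep (act γ i) = rep i := fun γ i =>
    congrArg Quotient.out (Quotient.sound (⟨γ, rfl⟩ : s.r i (act γ i))).symm
  -- key existence: for each index, an equivariant-under-stabilizer preimage
  have key : ∀ i : I, ∃ e : P.carrier, α e = f (b i) ∧
      ∀ δ : Γ, act δ i = i → P.ρ δ e = e := by
    intro i
    let S : Subgroup Γ :=
      { carrier := {γ | act γ i = i}
        one_mem' := hact_one i
        mul_mem' := fun {γ δ} hγ hδ => by
          show act (γ * δ) i = i
          rw [hact_mul, hδ, hγ]
        inv_mem' := fun {γ} hγ => by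
          show act γ⁻¹ i = i
          conv_lhs => rw [← hγ]
          exact hact_inv γ i }
    obtain ⟨e, he⟩ := hαsurj (f (b i))
    have hfix : ∀ δ : S, M.ρ δ.1 (f (b i)) = f (b i) := by
      rintro ⟨δ, hδ⟩
      rw [← hf, hact, hδ]
    have hc : ∀ δ : S, ∃ c : C.carrier, ι c = P.ρ δ.1 e - e := by
      intro δ
      have hker : P.ρ δ.1 e - e ∈ LinearMap.ker α := by
        rw [LinearMap.mem_ker, map_sub, hα, he, hfix δ, sub_self]
      rw [← hrk] at hker
      exact hker
    choose cf hcf using hc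
    have hcoc : ∀ δ ε : S, cf (δ * ε) = (C.ρ.comp S.subtype) δ (cf ε) + cf δ := by
      intro δ ε
      apply hιinj
      rw [hcf, map_add, hcf]
      have h1 : ι ((C.ρ.comp S.subtype) δ (cf ε)) = P.ρ δ.1 (ι (cf ε)) := hι δ.1 (cf ε)
      rw [h1, hcf]
      have h2 : ((δ * ε : S) : Γ) = (δ : Γ) * (ε : Γ) := rfl
      rw [h2, map_mul, Module.End.mul_apply, map_sub]
      abel
    obtain ⟨x, hx⟩ := cocycle_is_coboundary (C.ρ.comp S.subtype) (hC S) cf hcoc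
    refine ⟨e - ι x, ?_, ?_⟩
    · rw [map_sub, he]
      have hm : ι x ∈ LinearMap.ker α := hrk ▸ LinearMap.mem_range_self ι x
      rw [LinearMap.mem_ker.1 hm, sub_zero]
    · intro δ hδ
      have hδS : δ ∈ S := hδ
      have hx' : cf ⟨δ, hδS⟩ = C.ρ δ x - x := hx ⟨δ, hδS⟩
      have h1 : P.ρ δ e = e + ι (cf ⟨δ, hδS⟩) := by
        rw [hcf ⟨δ, hδS⟩]; abel
      rw [map_sub, h1, ← hι δ x, hx', map_sub]
      abel
  choose E hE1 hE2 using key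
  choose gam hgam using hrep
  let gb : I → P.carrier := fun i => P.ρ (gam i) (E (rep i))
  have hindep : ∀ (i : I) (γ : Γ), act γ (rep i) = i → P.ρ γ (E (rep i)) = gb i := by
    intro i γ hγ
    have hback := hact_inv (gam i) (rep i)
    rw [hgam i] at hback
    have hstab : act ((gam i)⁻¹ * γ) (rep i) = rep i := by
      rw [hact_mul, hγ]; exact hback
    have h2 := hE2 (rep i) ((gam i)⁻¹ * γ) hstab
    calc P.ρ γ (E (rep i))
        = P.ρ (gam i) (P.ρ ((gam i)⁻¹ * γ) (E (rep i))) := by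
          rw [← Module.End.mul_apply, ← map_mul, mul_inv_cancel_left]
      _ = gb i := by rw [h2]
  have hαgb : ∀ i, α (gb i) = f (b i) := by
    intro i
    show α (P.ρ (gam i) (E (rep i))) = f (b i)
    rw [hα, hE1, ← hf, hact, hgam]
  have hequiv_b : ∀ γ i, gb (act γ i) = P.ρ γ (gb i) := by
    intro γ i
    have h1 : act (γ * gam i) (rep (act γ i)) = act γ i := by
      rw [hrep_eq, hact_mul, hgam]
    rw [← hindep (act γ i) (γ * gam i) h1, hrep_eq, map_mul, Module.End.mul_apply]
  let g : N.carrier →ₗ[ℤ] P.carrier := b.constr ℕ gb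
  have hgbas : ∀ i, g (b i) = gb i := fun i => b.constr_basis ℕ gb i
  refine ⟨g, ?_, ?_⟩
  · intro γ m
    have heq : (g.comp (N.ρ γ) : N.carrier →ₗ[ℤ] P.carrier) = (P.ρ γ).comp g := by
      apply b.ext
      intro i
      simp only [LinearMap.comp_apply]
      rw [hact, hgbas, hgbas, hequiv_b]
    exact LinearMap.congr_fun heq m
  · apply b.ext
    intro i
    simp only [LinearMap.comp_apply]
    rw [hgbas, hαgb]

/-- versality of coflasque resolutions of the first type:
given `0 → C → P →[α] M → 0` with `C` coflasque and `P` permutation,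
any map from an invertible lattice `P'` to `M` factors through `α`. -/
theorem coflasque_resolution_first_type_versal
    {Γ : Type} [Group Γ] [Finite Γ]
    (C P M : GammaLattice Γ) (hC : C.IsCoflasque) (hP : P.IsPermutation)
    (ι : C.carrier →ₗ[ℤ] P.carrier) (α : P.carrier →ₗ[ℤ] M.carrier)
    (hse : IsShortExactSeq C.ρ P.ρ M.ρ ι α)
    (P' : GammaLattice Γ) (hP' : P'.IsInvertible)
    (f : P'.carrier →ₗ[ℤ] M.carrier) (hf : IsEquivariantMap P'.ρ M.ρ f) :
    ∃ g : P'.carrier →ₗ[ℤ] P.carrier,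
      IsEquivariantMap P'.ρ P.ρ g ∧ α.comp g = f := by
  obtain ⟨N, hN, i, p, hi, hp, hpi⟩ := hP'
  have hf' : IsEquivariantMap N.ρ M.ρ (f.comp p) := by
    intro γ n
    simp only [LinearMap.comp_apply]
    rw [hp, hf]
  obtain ⟨g', hg'eq, hg'α⟩ := perm_lift C P M hC ι α hse N hN (f.comp p) hf'
  refine ⟨g'.comp i, ?_, ?_⟩
  · intro γ m
    simp only [LinearMap.comp_apply]
    rw [hi, hg'eq]
  · rw [← LinearMap.comp_assoc, hg'α, LinearMap.comp_assoc, hpi, LinearMap.comp_id]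
end

section
/- Let Γ be a finite group and M a Γ-lattice. Suppose 0 → M →^β P → F → 0 is a short exact sequence of Γ-lattices with P permutation and F flasque (a flasque resolution of the first type). Then for every invertible Γ-lattice P' and every ℤ[Γ]-module homomorphism f : M → P' there exists a ℤ[Γ]-module homomorphism g : P → P' with g ∘ β = f. -/
variable {Γ : Type} [Group Γ]

/-! ### Auxiliary lemmas for the proof -/

open groupCohomology in
/-- From vanishing of `H¹` (as a `Subsingleton` statement), every 1-cocycle is a
1-coboundary. Stated over a general commutative ring to avoid `ℤ`-module instance
diamonds. -/
theorem exists_cobound {k G V : Type} [CommRing k] [Group G] [AddCommGroup V] [Module k V]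
    {ρ : Representation k G V}
    (hH : Subsingleton (groupCohomology.H1 (Rep.of ρ)))
    (u : G → V) (hu : ∀ g h, u (g * h) = ρ g (u h) + u g) :
    ∃ x : V, ∀ g, u g = ρ g x - x := by
  have hmem : u ∈ cocycles₁ (Rep.of ρ) := (mem_cocycles₁_iff (A := Rep.of ρ) u).2 hu
  have h0 : H1π (Rep.of ρ) ⟨u, hmem⟩ = 0 := Subsingleton.elim _ _
  have hmem2 : u ∈ coboundaries₁ (Rep.of ρ) := (H1π_eq_zero_iff _).1 h0
  obtain ⟨x, hx⟩ := hmem2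
  refine ⟨x, fun g => ?_⟩
  have h2 := congrFun hx g
  rw [← h2]
  rfl

/-- Key vanishing result (an instance of Shapiro's lemma): if `P` is a permutation
lattice and `F` is flasque, then every 1-cocycle of `Γ` valued in `Hom_ℤ(F, P)`
(with the conjugation action) is a coboundary. -/
theorem perm_coboundary {Γ : Type} [Group Γ] (P F : GammaLattice Γ)
    (hP : P.IsPermutation) (hF : F.IsFlasque)
    (c : Γ → (F.carrier →ₗ[ℤ] P.carrier))
    (hc : ∀ g h, c (g * h) = c g + (P.ρ g) ∘ₗ (c h) ∘ₗ (F.ρ g⁻¹)) :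
    ∃ Φ : F.carrier →ₗ[ℤ] P.carrier,
      ∀ g, c g = (P.ρ g) ∘ₗ Φ ∘ₗ (F.ρ g⁻¹) - Φ := by
  classical
  obtain ⟨ι, b, hb⟩ := hP
  have : Module.Finite ℤ P.carrier := P.finite
  have hfin : Finite ι := Module.Finite.finite_basis b
  have : Fintype ι := Fintype.ofFinite ι
  -- the permutation action on indices
  set σ : Γ → ι → ι := fun γ i => (hb γ i).choose with hσdef
  have hσ : ∀ γ i, P.ρ γ (b i) = b (σ γ i) := fun γ i => (hb γ i).choose_spec
  have hσmul : ∀ g h i, σ (g * h) i = σ g (σ h i) := by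
    intro g h i
    apply b.injective
    rw [← hσ, ← hσ, ← hσ, map_mul, Module.End.mul_apply]
  have hσone : ∀ i, σ 1 i = i := by
    intro i
    apply b.injective
    rw [← hσ, map_one, Module.End.one_apply]
  have hσinv : ∀ g i, σ g⁻¹ (σ g i) = i := by
    intro g i; rw [← hσmul, inv_mul_cancel, hσone]
  have hσinv' : ∀ g i, σ g (σ g⁻¹ i) = i := by
    intro g i; rw [← hσmul, mul_inv_cancel, hσone]
  -- coordinates transform by the inverse permutation
  have hcoord : ∀ (g : Γ) (j : ι) (y : P.carrier),
      b.coord j (P.ρ g y) = b.coord (σ g⁻¹ j) y := by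
    intro g j
    have hiff : ∀ m : ι, (σ g m = j) ↔ (m = σ g⁻¹ j) := by
      intro m
      constructor
      · intro h; rw [← h, hσinv]
      · intro h; rw [h, hσinv']
    have hmap : (b.coord j) ∘ₗ (P.ρ g) = b.coord (σ g⁻¹ j) := by
      apply b.ext
      intro m
      rw [LinearMap.comp_apply, hσ]
      simp only [Module.Basis.coord_apply, Module.Basis.repr_self, Finsupp.single_apply]
      rw [if_congr (hiff m) rfl rfl]
    intro y
    have := LinearMap.congr_fun hmap y
    simpa using this
  -- stabilizer subgroups
  set stab : ι → Subgroup Γ := fun i =>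
    { carrier := {g | σ g i = i}
      one_mem' := hσone i
      mul_mem' := by
        intro x y hx hy
        show σ (x * y) i = i
        rw [hσmul]
        change σ y i = i at hy
        change σ x i = i at hx
        rw [hy, hx]
      inv_mem' := by
        intro x hx
        change σ x i = i at hx
        show σ x⁻¹ i = i
        conv_lhs => rw [← hx]
        rw [hσinv] } with hstabdef
  have hstab : ∀ (i : ι) (g : Γ), g ∈ stab i ↔ σ g i = i := fun i g => Iff.rfl
  -- for each index, the associated 1-cocycle of the stabilizer valued in `F^∨`
  set u : ∀ i : ι, (stab i) → (F.carrier →ₗ[ℤ] ℤ) := fun i h => (b.coord i) ∘ₗ (c h.1) with hudef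
  have hu : ∀ (i : ι) (g h : stab i),
      u i (g * h) = (u i h) ∘ₗ (F.ρ ((g : Γ))⁻¹) + u i g := by
    intro i g h
    apply LinearMap.ext
    intro x
    have hginv : σ ((g : Γ))⁻¹ i = i := (stab i).inv_mem g.2
    have hume : ((g * h : stab i) : Γ) = (g : Γ) * (h : Γ) := rfl
    show b.coord i (c ((g * h : stab i) : Γ) x) = _
    rw [hume, hc (g : Γ) (h : Γ)]
    simp only [LinearMap.add_apply, LinearMap.comp_apply, map_add]
    rw [hcoord (g : Γ) i, hginv, add_comm]
    rfl
  have hφex : ∀ i : ι, ∃ x : F.carrier →ₗ[ℤ] ℤ,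
      ∀ g : stab i, u i g = x ∘ₗ (F.ρ ((g : Γ))⁻¹) - x := by
    intro i
    obtain ⟨x, hx⟩ := exists_cobound (hF (stab i)) (u i) (fun g h => hu i g h)
    exact ⟨x, fun g => hx g⟩
  set φ : ι → (F.carrier →ₗ[ℤ] ℤ) := fun i => (hφex i).choose with hφdef
  have hφ : ∀ (i : ι) (g : stab i), u i g = (φ i) ∘ₗ (F.ρ ((g : Γ))⁻¹) - φ i :=
    fun i => (hφex i).choose_spec
  -- pointwise form of the coboundary property
  have hφ' : ∀ (i : ι) (g : Γ), g ∈ stab i → ∀ x : F.carrier,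
      b.coord i (c g x) = (φ i) (F.ρ g⁻¹ x) - (φ i) x := by
    intro i g hg x
    exact LinearMap.congr_fun (hφ i ⟨g, hg⟩) x
  -- orbit representatives
  set sd : Setoid ι :=
    ⟨fun j j' => ∃ g, σ g j' = j, by
      constructor
      · intro j; exact ⟨1, hσone j⟩
      · rintro x y ⟨g, hg⟩
        exact ⟨g⁻¹, by rw [← hg, hσinv]⟩
      · rintro x y z ⟨g, hg⟩ ⟨g', hg'⟩
        exact ⟨g * g', by rw [hσmul, hg', hg]⟩⟩ with hsddef
  set r : ι → ι := fun j => (Quotient.mk sd j).out with hrdef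
  have hrep : ∀ j, ∃ g, σ g (r j) = j := by
    intro j
    have h1 : sd.r (r j) j := Quotient.exact (Quotient.out_eq (Quotient.mk sd j))
    obtain ⟨g, hg⟩ := h1
    exact ⟨g⁻¹, by rw [← hg, hσinv]⟩
  have hrσ : ∀ (g : Γ) (j : ι), r (σ g j) = r j := by
    intro g j
    have : Quotient.mk sd (σ g j) = Quotient.mk sd j := Quotient.sound ⟨g, rfl⟩
    show (Quotient.mk sd (σ g j)).out = (Quotient.mk sd j).out
    rw [this]
  set t : ι → Γ := fun j => (hrep j).choose with htdef
  have ht : ∀ j, σ (t j) (r j) = j := fun j => (hrep j).choose_spec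
  -- the coefficient functionals of the desired map
  set a : ι → (F.carrier →ₗ[ℤ] ℤ) := fun j =>
    ((φ (r j) : F.carrier →ₗ[ℤ] ℤ) ∘ₗ (F.ρ (t j)⁻¹)) - ((b.coord j) ∘ₗ (c (t j))) with hadef
  -- well-definedness: `a j` may be computed from any element carrying `r j` to `j`
  have wd : ∀ (j : ι) (g : Γ), σ g (r j) = j → ∀ x : F.carrier,
      a j x = (φ (r j)) (F.ρ g⁻¹ x) - b.coord j (c g x) := by
    intro j g hg x
    set g1 := t j with hg1def
    have hg1 : σ g1 (r j) = j := ht j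
    set h := g1⁻¹ * g with hhdef
    have hgdec : g = g1 * h := by rw [hhdef, ← mul_assoc, mul_inv_cancel, one_mul]
    have hσg1 : σ g1⁻¹ j = r j := by
      have h5 := congrArg (σ g1⁻¹) hg1
      rw [hσinv] at h5
      exact h5.symm
    have hh : h ∈ stab (r j) := by
      show σ h (r j) = r j
      rw [hhdef, hσmul, hg, hσg1]
    -- expand `c g` using the cocycle relation
    have hcg : ∀ y : F.carrier, b.coord j (c g y)
        = b.coord j (c g1 y) + (φ (r j)) (F.ρ g⁻¹ y) - (φ (r j)) (F.ρ g1⁻¹ y) := by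
      intro y
      conv_lhs => rw [hgdec, hc g1 h]
      simp only [LinearMap.add_apply, LinearMap.comp_apply, map_add]
      rw [hcoord g1 j]
      rw [hσg1, hφ' (r j) h hh (F.ρ g1⁻¹ y)]
      have hρ : F.ρ h⁻¹ ((F.ρ g1⁻¹) y) = F.ρ g⁻¹ y := by
        rw [← Module.End.mul_apply, ← map_mul]
        congr 2
        rw [hgdec]
        group
      rw [hρ]
      ring
    have : a j x = (φ (r j)) (F.ρ g1⁻¹ x) - b.coord j (c g1 x) := by
      rw [hadef]
      simp only [LinearMap.sub_apply, LinearMap.comp_apply]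
      rfl
    rw [this, hcg x]
    ring
  -- the main cocycle-transport identity
  have main : ∀ (g : Γ) (j : ι) (x : F.carrier),
      b.coord j (c g x) = a (σ g⁻¹ j) (F.ρ g⁻¹ x) - a j x := by
    intro g j x
    set j' := σ g⁻¹ j with hj'def
    have hjj' : σ g j' = j := hσinv' g j
    have hrjj' : r j = r j' := by rw [← hjj', hrσ]
    set g' := t j' with hg'def
    have hg' : σ g' (r j') = j' := ht j'
    have h2 : σ (g * g') (r j) = j := by
      rw [hσmul, hrjj', hg', hjj']
    have ha1 : a j x = (φ (r j)) (F.ρ (g * g')⁻¹ x) - b.coord j (c (g * g') x) :=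
      wd j (g * g') h2 x
    have hcgg' : b.coord j (c (g * g') x)
        = b.coord j (c g x) + b.coord j' (c g' (F.ρ g⁻¹ x)) := by
      rw [hc g g']
      simp only [LinearMap.add_apply, LinearMap.comp_apply, map_add]
      rw [hcoord g j]
    have ha2 : a j' (F.ρ g⁻¹ x)
        = (φ (r j')) (F.ρ g'⁻¹ (F.ρ g⁻¹ x)) - b.coord j' (c g' (F.ρ g⁻¹ x)) := by
      rw [hadef]
      simp only [LinearMap.sub_apply, LinearMap.comp_apply]
      rfl
    have hρρ : (φ (r j)) (F.ρ (g * g')⁻¹ x) = (φ (r j')) (F.ρ g'⁻¹ (F.ρ g⁻¹ x)) := by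
      rw [hrjj']
      congr 1
      rw [← Module.End.mul_apply, ← map_mul, mul_inv_rev]
    rw [ha1, hcgg', ha2, hρρ]
    ring
  -- assemble the linear map
  set Φ : F.carrier →ₗ[ℤ] P.carrier :=
    ∑ j : ι, @LinearMap.smulRight ℤ ℤ P.carrier F.carrier _ _ _ _ _ _ _ _
      (by refine @IsScalarTower.mk ℤ ℤ P.carrier ?_ ?_ ?_ ?_
          exact fun a b x => @mul_smul ℤ P.carrier _ P.isModule.toMulAction.toSemigroupAction a b x)
      (a j) (b j) with hΦdef
  have hΦcoord : ∀ (k : ι) (x : F.carrier), b.coord k (Φ x) = a k x := by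
    intro k x
    rw [hΦdef]
    rw [LinearMap.sum_apply, map_sum]
    simp only [LinearMap.smulRight_apply, map_smul, Module.Basis.coord_apply, Module.Basis.repr_self,
      Finsupp.single_apply, smul_eq_mul, mul_ite, mul_one, mul_zero]
    rw [Finset.sum_ite_eq' Finset.univ k (fun j => a j x)]
    simp
  refine ⟨Φ, fun g => ?_⟩
  apply LinearMap.ext
  intro x
  apply b.ext_elem_iff.2
  intro j
  rw [← Module.Basis.coord_apply, ← Module.Basis.coord_apply]
  have hrhs : b.coord j (((P.ρ g) ∘ₗ Φ ∘ₗ (F.ρ g⁻¹) - Φ) x)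
      = a (σ g⁻¹ j) (F.ρ g⁻¹ x) - a j x := by
    simp only [LinearMap.sub_apply, LinearMap.comp_apply, map_sub]
    rw [hcoord g j, hΦcoord, hΦcoord]
  rw [hrhs, main]

/-- The same vanishing for an invertible lattice target. -/
theorem invertible_coboundary {Γ : Type} [Group Γ] (P' F : GammaLattice Γ)
    (hP' : P'.IsInvertible) (hF : F.IsFlasque)
    (c : Γ → (F.carrier →ₗ[ℤ] P'.carrier))
    (hc : ∀ g h, c (g * h) = c g + (P'.ρ g) ∘ₗ (c h) ∘ₗ (F.ρ g⁻¹)) :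
    ∃ Φ : F.carrier →ₗ[ℤ] P'.carrier,
      ∀ g, c g = (P'.ρ g) ∘ₗ Φ ∘ₗ (F.ρ g⁻¹) - Φ := by
  obtain ⟨N, hN, i, p, hi, hp, hpi⟩ := hP'
  set c' : Γ → (F.carrier →ₗ[ℤ] N.carrier) := fun g => i ∘ₗ c g with hc'def
  have hc' : ∀ g h, c' (g * h) = c' g + (N.ρ g) ∘ₗ (c' h) ∘ₗ (F.ρ g⁻¹) := by
    intro g h
    apply LinearMap.ext
    intro x
    simp only [hc'def, LinearMap.comp_apply, LinearMap.add_apply, hc g h, map_add]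
    congr 1
    exact hi g (c h (F.ρ g⁻¹ x))
  obtain ⟨Ψ, hΨ⟩ := perm_coboundary N F hN hF c' hc'
  refine ⟨p ∘ₗ Ψ, fun g => ?_⟩
  apply LinearMap.ext
  intro x
  have h1 : p (c' g x) = c g x := by
    have := LinearMap.congr_fun hpi (c g x)
    simpa [hc'def] using this
  rw [← h1, hΨ g]
  simp only [LinearMap.sub_apply, LinearMap.comp_apply, map_sub]
  congr 1
  exact hp g (Ψ (F.ρ g⁻¹ x))

/-- A `k`-linear map whose values lie in the range of an injective map factors
through it. Stated over a general commutative ring to avoid instance diamonds. -/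
theorem exists_retraction {k A B : Type} [CommRing k] [AddCommGroup A] [Module k A]
    [AddCommGroup B] [Module k B] (β : A →ₗ[k] B) (hinj : Function.Injective β)
    (q : B →ₗ[k] B) (hq : ∀ y, q y ∈ LinearMap.range β) :
    ∃ r : B →ₗ[k] A, ∀ y, β (r y) = q y := by
  set eβ := LinearEquiv.ofInjective β hinj with heβdef
  refine ⟨(eβ.symm.toLinearMap) ∘ₗ (q.codRestrict (LinearMap.range β) hq), fun y => ?_⟩
  have h1 : ∀ z : LinearMap.range β, β (eβ.symm z) = (z : B) := by
    intro z
    have := congrArg Subtype.val (eβ.apply_symm_apply z)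
    simpa [heβdef, LinearEquiv.ofInjective_apply] using this
  show β (eβ.symm (q.codRestrict (LinearMap.range β) hq y)) = q y
  rw [h1]
  rfl

/-- versality of flasque resolutions of the first type:
given `0 → M →[β] P → F → 0` with `P` permutation and `F` flasque,
any map from `M` to an invertible lattice `P'` factors through `β`. -/
theorem flasque_resolution_first_type_versal
    {Γ : Type} [Group Γ] [Finite Γ]
    (M P F : GammaLattice Γ) (hP : P.IsPermutation) (hF : F.IsFlasque)
    (β : M.carrier →ₗ[ℤ] P.carrier) (π : P.carrier →ₗ[ℤ] F.carrier)
    (hse : IsShortExactSeq M.ρ P.ρ F.ρ β π)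
    (P' : GammaLattice Γ) (hP' : P'.IsInvertible)
    (f : M.carrier →ₗ[ℤ] P'.carrier) (hf : IsEquivariantMap M.ρ P'.ρ f) :
    ∃ g : P.carrier →ₗ[ℤ] P'.carrier,
      IsEquivariantMap P.ρ P'.ρ g ∧ g.comp β = f := by
  
  classical
  obtain ⟨hβeq, hπeq, hβinj, hπsurj, hrange⟩ := hse
  -- representations act invertibly
  have hρinv : ∀ {W : Type} [AddCommGroup W] [Module ℤ W]
      (ρ : Representation ℤ Γ W) (g : Γ) (w : W), ρ g (ρ g⁻¹ w) = w := by
    intro W _ _ ρ g w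
    rw [← Module.End.mul_apply, ← map_mul, mul_inv_cancel, map_one, Module.End.one_apply]
  -- a ℤ-linear section of π
  have : Module.Free ℤ F.carrier := F.free
  set bf := Module.Free.chooseBasis ℤ F.carrier with hbfdef
  set s : F.carrier →ₗ[ℤ] P.carrier :=
    bf.constr ℕ (fun k => (hπsurj (bf k)).choose) with hsdef
  have hπs : ∀ x, π (s x) = x := by
    have hcomp : π ∘ₗ s = LinearMap.id := by
      apply bf.ext
      intro k
      rw [LinearMap.comp_apply, hsdef, Module.Basis.constr_basis]
      exact (hπsurj (bf k)).choose_spec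
    intro x
    exact LinearMap.congr_fun hcomp x
  -- a ℤ-linear retraction of β
  have hker : ∀ y : P.carrier, π y = 0 → y ∈ LinearMap.range β := by
    intro y hy; rw [hrange]; exact hy
  have hπβ : ∀ m, π (β m) = 0 := by
    intro m
    have : β m ∈ LinearMap.ker π := by rw [← hrange]; exact ⟨m, rfl⟩
    exact this
  set q : P.carrier →ₗ[ℤ] P.carrier := LinearMap.id - s ∘ₗ π with hqdef
  have hq : ∀ y, q y ∈ LinearMap.range β := by
    intro y
    apply hker
    simp only [hqdef, LinearMap.sub_apply, LinearMap.id_apply, LinearMap.comp_apply,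
      map_sub, hπs]
    exact sub_self _
  obtain ⟨r, hβr⟩ := exists_retraction β hβinj q hq
  have hrβ : ∀ m, r (β m) = m := by
    intro m
    apply hβinj
    rw [hβr]
    simp only [hqdef, LinearMap.sub_apply, LinearMap.id_apply, LinearMap.comp_apply, hπβ,
      map_zero]
    exact sub_zero _
  -- the ℤ-linear (non-equivariant) extension
  set g₀ : P.carrier →ₗ[ℤ] P'.carrier := f ∘ₗ r with hg₀def
  have hg₀β : ∀ m, g₀ (β m) = f m := by
    intro m; rw [hg₀def, LinearMap.comp_apply, hrβ]
  -- the obstruction cocycle on P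
  set c : Γ → (P.carrier →ₗ[ℤ] P'.carrier) :=
    fun γ => (P'.ρ γ) ∘ₗ g₀ ∘ₗ (P.ρ γ⁻¹) - g₀ with hcdef
  have hckill : ∀ (γ : Γ) (y : P.carrier), y ∈ LinearMap.range β → c γ y = 0 := by
    rintro γ y ⟨m, rfl⟩
    have h1 : P.ρ γ⁻¹ (β m) = β (M.ρ γ⁻¹ m) := (hβeq γ⁻¹ m).symm
    simp only [hcdef, LinearMap.sub_apply, LinearMap.comp_apply, h1, hg₀β]
    have h2 : P'.ρ γ (f (M.ρ γ⁻¹ m)) = f m := by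
      rw [← hf γ (M.ρ γ⁻¹ m), hρinv M.ρ γ m]
    rw [h2]
    exact sub_self _
  have hccoc : ∀ g h, c (g * h) = c g + (P'.ρ g) ∘ₗ (c h) ∘ₗ (P.ρ g⁻¹) := by
    intro g h
    apply LinearMap.ext
    intro x
    simp only [hcdef, LinearMap.sub_apply, LinearMap.comp_apply, LinearMap.add_apply,
      map_sub]
    have e1 : P.ρ (g * h)⁻¹ x = P.ρ h⁻¹ (P.ρ g⁻¹ x) := by
      rw [← Module.End.mul_apply, ← map_mul, mul_inv_rev]
    have e2 : ∀ w, P'.ρ (g * h) w = P'.ρ g (P'.ρ h w) := by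
      intro w; rw [map_mul]; rfl
    rw [e1, e2]
    abel
  -- descend to a cocycle on F
  set d : Γ → (F.carrier →ₗ[ℤ] P'.carrier) := fun γ => (c γ) ∘ₗ s with hddef
  have hdπ : ∀ (γ : Γ) (y : P.carrier), d γ (π y) = c γ y := by
    intro γ y
    have hmem : y - s (π y) ∈ LinearMap.range β := by
      apply hker
      simp only [map_sub, hπs]
      exact sub_self _
    have := hckill γ _ hmem
    rw [map_sub] at this
    have h2 : c γ y = c γ (s (π y)) := by
      have := sub_eq_zero.1 this
      exact this
    rw [hddef]
    exact h2.symm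
  have hdcoc : ∀ g h, d (g * h) = d g + (P'.ρ g) ∘ₗ (d h) ∘ₗ (F.ρ g⁻¹) := by
    intro g h
    apply LinearMap.ext
    intro x
    simp only [hddef, LinearMap.comp_apply, LinearMap.add_apply]
    rw [hccoc g h]
    simp only [LinearMap.add_apply, LinearMap.comp_apply]
    congr 1
    -- c h (P.ρ g⁻¹ (s x)) = c h (s (F.ρ g⁻¹ x))
    have hmem : P.ρ g⁻¹ (s x) - s (F.ρ g⁻¹ x) ∈ LinearMap.range β := by
      apply hker
      simp only [map_sub, hπs]
      rw [hπeq g⁻¹ (s x), hπs]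
      exact sub_self _
    have := hckill h _ hmem
    rw [map_sub] at this
    have h2 := sub_eq_zero.1 this
    rw [h2]
  -- apply the vanishing theorem
  obtain ⟨Φ, hΦ⟩ := invertible_coboundary P' F hP' hF d hdcoc
  refine ⟨g₀ - Φ ∘ₗ π, ?_, ?_⟩
  · intro γ m
    have hρinv' : ∀ {W : Type} [AddCommGroup W] [Module ℤ W]
        (ρ : Representation ℤ Γ W) (g : Γ) (w : W), ρ g⁻¹ (ρ g w) = w := by
      intro W _ _ ρ g w
      have := hρinv ρ g⁻¹ w
      rwa [inv_inv] at this
    have hπm : π (P.ρ γ m) = F.ρ γ (π m) := hπeq γ m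
    have h1 : d γ (π (P.ρ γ m)) = c γ (P.ρ γ m) := hdπ γ (P.ρ γ m)
    have h2 : c γ (P.ρ γ m) = P'.ρ γ (g₀ m) - g₀ (P.ρ γ m) := by
      simp only [hcdef, LinearMap.sub_apply, LinearMap.comp_apply]
      rw [hρinv' P.ρ γ m]
    have h3 : d γ (π (P.ρ γ m)) = P'.ρ γ (Φ (π m)) - Φ (π (P.ρ γ m)) := by
      rw [hΦ γ]
      simp only [LinearMap.sub_apply, LinearMap.comp_apply]
      rw [hπm, hρinv' F.ρ γ (π m), ← hπm]
    have key : P'.ρ γ (Φ (π m)) - Φ (π (P.ρ γ m)) = P'.ρ γ (g₀ m) - g₀ (P.ρ γ m) := by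
      rw [← h3, h1, h2]
    have h4 : P'.ρ γ (Φ (π m)) - P'.ρ γ (g₀ m) = Φ (π (P.ρ γ m)) - g₀ (P.ρ γ m) :=
      sub_eq_sub_iff_sub_eq_sub.1 key
    show (g₀ - Φ ∘ₗ π) (P.ρ γ m) = P'.ρ γ ((g₀ - Φ ∘ₗ π) m)
    simp only [LinearMap.sub_apply, LinearMap.comp_apply, map_sub]
    calc g₀ (P.ρ γ m) - Φ (π (P.ρ γ m))
        = -(Φ (π (P.ρ γ m)) - g₀ (P.ρ γ m)) := by rw [neg_sub]
      _ = -(P'.ρ γ (Φ (π m)) - P'.ρ γ (g₀ m)) := by rw [h4]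
      _ = P'.ρ γ (g₀ m) - P'.ρ γ (Φ (π m)) := by rw [neg_sub]
  · apply LinearMap.ext
    intro m
    simp only [LinearMap.sub_apply, LinearMap.comp_apply, hg₀β, hπβ, map_zero]
    exact sub_zero _
end

section
/- Let Γ be a finite group and M a Γ-lattice. Suppose 0 → M →^α C → P → 0 is a short exact sequence of Γ-lattices with C coflasque and P permutation (a coflasque resolution of the second type), and suppose 0 → M →^γ N → Q → 0 is a short exact sequence of Γ-lattices with Q invertible. Then there exists a ℤ[Γ]-module homomorphism φ : N → C such that φ ∘ γ = α. -/
variable {Γ : Type} [Group Γ]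

open groupCohomology in
lemma exists_dZero_eq {G : Type} [Group G] {V : Type} [AddCommGroup V] [Module ℤ V]
    (ρ : Representation ℤ G V) (hs : Subsingleton (groupCohomology.H1 (Rep.of ρ)))
    (c : G → V) (hc : c ∈ groupCohomology.cocycles₁ (Rep.of ρ)) :
    ∃ x : V, ∀ g : G, ρ g x - x = c g := by
  let z : cocycles₁ (Rep.of ρ) := ⟨c, hc⟩
  have h0 : H1π (Rep.of ρ) z = H1π (Rep.of ρ) 0 := Subsingleton.elim _ _
  have hzb : ⇑z ∈ coboundaries₁ (Rep.of ρ) := by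
    rw [← H1π_eq_zero_iff, h0, map_zero]
  obtain ⟨x, hx⟩ := hzb
  exact ⟨x, fun g => by have h := congrFun hx g; rw [d₀₁_hom_apply] at h; exact h⟩

/-- Auxiliary: an extension of a permutation module by a coflasque lattice
admits an equivariant section. -/
theorem exists_section_of_permutation
    {Γ : Type} [Group Γ] (C : GammaLattice Γ) (hC : C.IsCoflasque)
    {S F : Type} [AddCommGroup S] [Module ℤ S] [AddCommGroup F] [Module ℤ F]
    (ρS : Representation ℤ Γ S) (ρF : Representation ℤ Γ F)
    {ι' : Type} (b : Module.Basis ι' ℤ S) (hb : ∀ (γ : Γ) (i : ι'), ∃ j, ρS γ (b i) = b j)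
    (ι : C.carrier →ₗ[ℤ] F) (π : F →ₗ[ℤ] S)
    (hse : IsShortExactSeq C.ρ ρF ρS ι π) :
    ∃ s : S →ₗ[ℤ] F, IsEquivariantMap ρS ρF s ∧ π.comp s = LinearMap.id := by
  obtain ⟨hι_eq, hπ_eq, hι_inj, hπ_surj, hrk⟩ := hse
  classical
  -- set up the action of Γ on the index set
  let act : Γ → ι' → ι' := fun γ i => (hb γ i).choose
  have h_act : ∀ (γ : Γ) (i : ι'), ρS γ (b i) = b (act γ i) :=
    fun γ i => (hb γ i).choose_spec
  letI : SMul Γ ι' := ⟨act⟩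
  have h_smul : ∀ (γ : Γ) (i : ι'), ρS γ (b i) = b (γ • i) := h_act
  letI : MulAction Γ ι' :=
    { one_smul := fun i => b.injective (by rw [← h_smul]; simp)
      mul_smul := fun g h i => b.injective (by
        rw [← h_smul, ← h_smul, ← h_smul, map_mul]; rfl) }
  -- stabilizer-fixed lifts of orbit representatives
  have lift_exists : ∀ i₀ : ι',
      ∃ e : F, π e = b i₀ ∧ ∀ σ : Γ, σ • i₀ = i₀ → ρF σ e = e := by
    intro i₀
    obtain ⟨f₀, hf₀⟩ := hπ_surj (b i₀)
    let Γ₀ := MulAction.stabilizer Γ i₀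
    have hker : ∀ σ : Γ₀, ρF σ.1 f₀ - f₀ ∈ LinearMap.range ι := by
      intro σ
      rw [hrk, LinearMap.mem_ker, map_sub, hπ_eq, hf₀, h_smul, σ.2, sub_self]
    let c : Γ₀ → C.carrier := fun σ => (hker σ).choose
    have hc : ∀ σ : Γ₀, ι (c σ) = ρF σ.1 f₀ - f₀ := fun σ => (hker σ).choose_spec
    have hz : c ∈ groupCohomology.cocycles₁ (Rep.of (C.ρ.comp Γ₀.subtype)) := by
      rw [groupCohomology.mem_cocycles₁_iff]
      intro g h
      apply hι_inj
      show ι (c (g * h)) = ι (C.ρ g.1 (c h) + c g)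
      rw [map_add, hι_eq g.1 (c h), hc, hc, hc]
      show ρF (g.1 * h.1) f₀ - f₀ = _
      rw [map_mul]
      simp only [Module.End.mul_apply, map_sub]
      abel
    have hx' : ∃ y : C.carrier, ∀ g : Γ₀, C.ρ g.1 y - y = c g := by
      obtain ⟨x, hx⟩ := exists_dZero_eq (C.ρ.comp Γ₀.subtype) (hC Γ₀) c hz
      exact ⟨x, fun g => hx g⟩
    obtain ⟨x, hx⟩ := hx'
    refine ⟨f₀ - ι x, ?_, ?_⟩
    · rw [map_sub, hf₀]
      have : π (ι x) = 0 := by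
        have : ι x ∈ LinearMap.ker π := hrk ▸ LinearMap.mem_range_self ι x
        exact this
      rw [this, sub_zero]
    · intro σ hσ
      have hxσ : C.ρ σ x - x = c ⟨σ, hσ⟩ := hx ⟨σ, hσ⟩
      
      have h1 : ρF σ f₀ = ι (c ⟨σ, hσ⟩) + f₀ := by
        rw [hc ⟨σ, hσ⟩]; abel
      rw [map_sub, ← hι_eq σ x, h1, show (C.ρ σ) x = c ⟨σ, hσ⟩ + x by
        rw [← hxσ]; abel]
      rw [map_add]
      abel
  let e₀ : Quotient (MulAction.orbitRel Γ ι') → F := fun o => (lift_exists o.out).choose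
  have he₀π : ∀ o : Quotient (MulAction.orbitRel Γ ι'), π (e₀ o) = b o.out :=
    fun o => (lift_exists o.out).choose_spec.1
  have he₀σ : ∀ (o : Quotient (MulAction.orbitRel Γ ι')) (σ : Γ),
      σ • o.out = o.out → ρF σ (e₀ o) = e₀ o :=
    fun o => (lift_exists o.out).choose_spec.2
  have indep : ∀ (o : Quotient (MulAction.orbitRel Γ ι')) (j : ι') (h h' : Γ),
      h • j = o.out → h' • j = o.out → ρF h⁻¹ (e₀ o) = ρF h'⁻¹ (e₀ o) := by
    intro o j h h' hh hh'
    have hst : (h' * h⁻¹) • o.out = o.out := by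
      rw [mul_smul, ← hh, inv_smul_smul, hh', ← hh]
    calc ρF h⁻¹ (e₀ o) = ρF h'⁻¹ (ρF (h' * h⁻¹) (e₀ o)) := by
          rw [← Module.End.mul_apply, ← map_mul]; group
      _ = ρF h'⁻¹ (e₀ o) := by rw [he₀σ o _ hst]
  have hgex : ∀ i : ι', ∃ g : Γ, g • i = (Quotient.mk (MulAction.orbitRel Γ ι') i).out := by
    intro i
    have h := Quotient.exact (Quotient.mk (MulAction.orbitRel Γ ι') i).out_eq
    exact MulAction.mem_orbit_iff.mp h
  let val : ι' → F := fun i =>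
    ρF ((hgex i).choose)⁻¹ (e₀ (Quotient.mk (MulAction.orbitRel Γ ι') i))
  have val_eq : ∀ (i : ι') (g : Γ), g • i = (Quotient.mk (MulAction.orbitRel Γ ι') i).out →
      val i = ρF g⁻¹ (e₀ (Quotient.mk (MulAction.orbitRel Γ ι') i)) := by
    intro i g hg
    exact indep _ i _ g (hgex i).choose_spec hg
  have hπval : ∀ i : ι', π (val i) = b i := by
    intro i
    have hg := (hgex i).choose_spec
    show π (ρF ((hgex i).choose)⁻¹ (e₀ _)) = b i
    rw [hπ_eq ((hgex i).choose)⁻¹ _, he₀π, h_smul]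
    exact congrArg b (inv_smul_eq_iff.mpr hg.symm)
  have hval_eqv : ∀ (γ : Γ) (i : ι'), val (γ • i) = ρF γ (val i) := by
    intro γ i
    have hq : (Quotient.mk (MulAction.orbitRel Γ ι') (γ • i)) =
        (Quotient.mk (MulAction.orbitRel Γ ι') i) :=
      Quotient.sound (MulAction.mem_orbit_iff.mpr ⟨γ, rfl⟩)
    set g := (hgex i).choose with hgdef
    have hg : g • i = (Quotient.mk (MulAction.orbitRel Γ ι') i).out := (hgex i).choose_spec
    have h1 : (g * γ⁻¹) • (γ • i) = (Quotient.mk (MulAction.orbitRel Γ ι') (γ • i)).out := by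
      rw [hq, ← hg, mul_smul, inv_smul_smul]
    have h2 := val_eq (γ • i) (g * γ⁻¹) h1
    rw [h2, hq, mul_inv_rev, inv_inv, map_mul]
    show ρF γ (ρF g⁻¹ (e₀ _)) = _
    rw [← val_eq i g hg]
  haveI : @SMulCommClass ℤ ℤ F (‹Module ℤ F›.toDistribMulAction.toMulAction.toSMul)
      (‹Module ℤ F›.toDistribMulAction.toMulAction.toSMul) :=
    @SMulCommClass.mk ℤ ℤ F (‹Module ℤ F›.toDistribMulAction.toMulAction.toSMul)
      (‹Module ℤ F›.toDistribMulAction.toMulAction.toSMul) (fun a c x => by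
        letI : MulAction ℤ F := ‹Module ℤ F›.toDistribMulAction.toMulAction
        rw [smul_smul, smul_smul, mul_comm])
  refine ⟨b.constr ℤ val, ?_, ?_⟩
  · intro γ m
    have : (b.constr ℤ val).comp (ρS γ) = (ρF γ).comp (b.constr ℤ val) := by
      apply b.ext
      intro i
      simp only [LinearMap.comp_apply, h_smul γ i, Module.Basis.constr_basis]
      exact hval_eqv γ i
    exact LinearMap.congr_fun this m
  · apply b.ext
    intro i
    simp only [LinearMap.comp_apply, Module.Basis.constr_basis, LinearMap.id_apply]
    exact hπval i

/-- versality of coflasque resolutions of the second type: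
given `0 → M →[α] C → P → 0` with `C` coflasque and `P` permutation,
and any extension `0 → M →[γ] N → Q → 0` with `Q` invertible, there is
`φ : N → C` with `φ ∘ γ = α`. -/
theorem coflasque_resolution_second_type_versal
    {Γ : Type} [Group Γ] [Finite Γ]
    (M C P N Q : GammaLattice Γ)
    (hC : C.IsCoflasque) (hP : P.IsPermutation) (hQ : Q.IsInvertible)
    (α : M.carrier →ₗ[ℤ] C.carrier) (p : C.carrier →ₗ[ℤ] P.carrier)
    (hse₁ : IsShortExactSeq M.ρ C.ρ P.ρ α p)
    (γmap : M.carrier →ₗ[ℤ] N.carrier) (q : N.carrier →ₗ[ℤ] Q.carrier)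
    (hse₂ : IsShortExactSeq M.ρ N.ρ Q.ρ γmap q) :
    ∃ φ : N.carrier →ₗ[ℤ] C.carrier,
      IsEquivariantMap N.ρ C.ρ φ ∧ φ.comp γmap = α := by
  classical
  letI : Module ℤ (C.carrier × N.carrier) := Prod.instModule
  obtain ⟨hα_eq, hp_eq, hα_inj, hp_surj, hrk₁⟩ := hse₁
  obtain ⟨hγ_eq, hq_eq, hγ_inj, hq_surj, hrk₂⟩ := hse₂
  obtain ⟨SL, ⟨ιS, bS, hbS⟩, iQ, pQ, hiQ_eq, hpQ_eq, hpi⟩ := hQ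
  -- the pushout E of α and γmap
  let δ := α.prod (-γmap)
  have hδ : ∀ m, δ m = (α m, -γmap m) := fun m => rfl
  let K := LinearMap.range δ
  have hγker : ∀ m, q (γmap m) = 0 := fun m => by
    have : γmap m ∈ LinearMap.ker q := hrk₂ ▸ LinearMap.mem_range_self γmap m
    exact this
  have hKinv : ∀ g : Γ, K ≤ K.comap (((C.ρ g).prodMap (N.ρ g))) := by
    rintro g x ⟨m, rfl⟩
    refine ⟨M.ρ g m, ?_⟩
    show (α (M.ρ g m), -γmap (M.ρ g m)) =
      ((C.ρ g).prodMap (N.ρ g)) (α m, -γmap m)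
    show _ = (C.ρ g (α m), N.ρ g (-γmap m))
    rw [← hα_eq, map_neg, ← hγ_eq]
  letI : Module ℤ ((C.carrier × N.carrier) ⧸ K) := Submodule.Quotient.module K
  let ρE : Representation ℤ Γ ((C.carrier × N.carrier) ⧸ K) :=
    { toFun := fun g => Submodule.mapQ K K (((C.ρ g).prodMap (N.ρ g))) (hKinv g)
      map_one' := Submodule.linearMap_qext _ (by
        ext x <;> simp [Submodule.mapQ_apply])
      map_mul' := fun g h => Submodule.linearMap_qext _ (by
        ext x <;>
          simp [Submodule.mapQ_apply, Module.End.mul_apply]) }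
  have hρE_mk : ∀ (g : Γ) (x : C.carrier × N.carrier),
      ρE g (Submodule.Quotient.mk x) =
        Submodule.Quotient.mk (((C.ρ g).prodMap (N.ρ g)) x) :=
    fun g x => rfl
  let ιE : C.carrier →ₗ[ℤ] ((C.carrier × N.carrier) ⧸ K) :=
    K.mkQ.comp (LinearMap.inl ℤ _ _)
  let jE : N.carrier →ₗ[ℤ] ((C.carrier × N.carrier) ⧸ K) :=
    K.mkQ.comp (LinearMap.inr ℤ _ _)
  have hπE_ker : K ≤ LinearMap.ker (q.comp (LinearMap.snd ℤ C.carrier N.carrier)) := by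
    rintro x ⟨m, rfl⟩
    show q (-γmap m) = 0
    rw [map_neg, hγker, neg_zero]
  let πE : ((C.carrier × N.carrier) ⧸ K) →ₗ[ℤ] Q.carrier :=
    K.liftQ (q.comp (LinearMap.snd ℤ _ _)) hπE_ker
  have hπE_mk : ∀ x : C.carrier × N.carrier,
      πE (Submodule.Quotient.mk x) = q x.2 := fun x => rfl
  have hιE_eq : IsEquivariantMap C.ρ ρE ιE := by
    intro g c
    symm
    show ρE g (Submodule.Quotient.mk (c, 0)) = Submodule.Quotient.mk (C.ρ g c, 0)
    rw [hρE_mk]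
    show Submodule.Quotient.mk (C.ρ g c, N.ρ g 0) = _
    rw [map_zero]
  have hjE_eq : IsEquivariantMap N.ρ ρE jE := by
    intro g n
    symm
    show ρE g (Submodule.Quotient.mk (0, n)) = Submodule.Quotient.mk (0, N.ρ g n)
    rw [hρE_mk]
    show Submodule.Quotient.mk (C.ρ g 0, N.ρ g n) = _
    rw [map_zero]
  have hπE_eq : IsEquivariantMap ρE Q.ρ πE := by
    intro g e
    obtain ⟨x, rfl⟩ := Submodule.Quotient.mk_surjective K e
    rw [hρE_mk, hπE_mk, hπE_mk]
    show q (N.ρ g x.2) = Q.ρ g (q x.2)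
    exact hq_eq g x.2
  have hιE_inj : Function.Injective ιE := by
    rw [injective_iff_map_eq_zero]
    intro c hc
    have : ((c, 0) : C.carrier × N.carrier) ∈ K :=
      (Submodule.Quotient.mk_eq_zero K).mp hc
    obtain ⟨m, hm⟩ := this
    have hm1 : α m = c := congrArg Prod.fst hm
    have hm2 : -γmap m = 0 := congrArg Prod.snd hm
    have : m = 0 := hγ_inj (by rw [← neg_eq_zero] at *; simpa using hm2)
    rw [← hm1, this, map_zero]
  have hπE_surj : Function.Surjective πE := by
    intro y
    obtain ⟨n, rfl⟩ := hq_surj y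
    exact ⟨Submodule.Quotient.mk (0, n), rfl⟩
  have hπιE : ∀ c, πE (ιE c) = 0 := by
    intro c
    show q (0 : N.carrier) = 0
    exact map_zero q
  have hkerπE : LinearMap.range ιE = LinearMap.ker πE := by
    apply le_antisymm
    · rintro _ ⟨c, rfl⟩
      exact hπιE c
    · rintro e he
      obtain ⟨x, rfl⟩ := Submodule.Quotient.mk_surjective K e
      have hx2 : q x.2 = 0 := he
      have : x.2 ∈ LinearMap.range γmap := hrk₂ ▸ hx2
      obtain ⟨m, hm⟩ := this
      refine ⟨x.1 + α m, ?_⟩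
      show Submodule.Quotient.mk ((x.1 + α m, 0) : C.carrier × N.carrier) = _
      rw [Submodule.Quotient.eq]
      show _ ∈ LinearMap.range δ
      refine ⟨m, ?_⟩
      rw [hδ m]
      show (α m, -γmap m) = (x.1 + α m - x.1, 0 - x.2)
      rw [hm, Prod.mk.injEq]
      constructor <;> abel
  -- commuting square
  have hcomm : ∀ m, ιE (α m) = jE (γmap m) := by
    intro m
    show Submodule.Quotient.mk ((α m, 0) : C.carrier × N.carrier) =
      Submodule.Quotient.mk ((0, γmap m) : C.carrier × N.carrier)
    rw [Submodule.Quotient.eq]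
    show _ ∈ LinearMap.range δ
    refine ⟨m, ?_⟩
    rw [hδ m]
    show (α m, -γmap m) = (α m - 0, 0 - γmap m)
    rw [Prod.mk.injEq]
    constructor <;> abel
  -- pullback E' of πE and pQ inside E × S
  letI : Module ℤ (((C.carrier × N.carrier) ⧸ K) × SL.carrier) := Prod.instModule
  set ψ := πE.comp (LinearMap.fst ℤ ((C.carrier × N.carrier) ⧸ K) SL.carrier) -
    pQ.comp (LinearMap.snd ℤ ((C.carrier × N.carrier) ⧸ K) SL.carrier) with hψ
  set E' := LinearMap.ker ψ with hE'
  letI : Module ℤ E' := E'.module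
  have hmemE' : ∀ w : ((C.carrier × N.carrier) ⧸ K) × SL.carrier,
      w ∈ E' ↔ πE w.1 = pQ w.2 := by
    intro w
    rw [hE', LinearMap.mem_ker, hψ]
    constructor
    · intro h; have := sub_eq_zero.mp h; exact this
    · intro h; show πE w.1 - pQ w.2 = 0; rw [h, sub_self]
  have hE'inv : ∀ (g : Γ), ∀ w ∈ E', ((ρE g).prodMap (SL.ρ g)) w ∈ E' := by
    intro g w hw
    rw [hmemE'] at hw ⊢
    show πE (ρE g w.1) = pQ (SL.ρ g w.2)
    rw [hπE_eq g w.1, hpQ_eq g w.2, hw]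
  let ρE' : Representation ℤ Γ E' :=
    { toFun := fun g => (((ρE g).prodMap (SL.ρ g))).restrict (hE'inv g)
      map_one' := by
        apply LinearMap.ext; rintro ⟨w, hw⟩
        apply Subtype.ext
        show ((ρE 1).prodMap (SL.ρ 1)) w = w
        rw [map_one, map_one]
        rfl
      map_mul' := fun g h => by
        apply LinearMap.ext; rintro ⟨w, hw⟩
        apply Subtype.ext
        show ((ρE (g*h)).prodMap (SL.ρ (g*h))) w =
          ((ρE g).prodMap (SL.ρ g)) (((ρE h).prodMap (SL.ρ h)) w)
        rw [map_mul, map_mul]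
        rfl }
  have hι'mem : ∀ c : C.carrier, ((ιE c, 0) :
      ((C.carrier × N.carrier) ⧸ K) × SL.carrier) ∈ E' := by
    intro c
    rw [hmemE']
    show πE (ιE c) = pQ 0
    rw [hπιE, map_zero]
  let ι' : C.carrier →ₗ[ℤ] E' :=
    LinearMap.codRestrict E' (ιE.prod 0) (fun c => hι'mem c)
  let π' : E' →ₗ[ℤ] SL.carrier := (LinearMap.snd ℤ _ _).comp E'.subtype
  have hse' : IsShortExactSeq C.ρ ρE' SL.ρ ι' π' := by
    refine ⟨?_, ?_, ?_, ?_, ?_⟩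
    · intro g c
      apply Subtype.ext
      show (ιE (C.ρ g c), (0 : SL.carrier)) = ((ρE g).prodMap (SL.ρ g)) (ιE c, 0)
      show _ = (ρE g (ιE c), SL.ρ g 0)
      rw [map_zero, hιE_eq g c]
    · intro g w
      rfl
    · intro a b hab
      exact hιE_inj (congrArg Prod.fst (congrArg Subtype.val hab))
    · intro x
      obtain ⟨e, he⟩ := hπE_surj (pQ x)
      exact ⟨⟨(e, x), (hmemE' _).mpr he⟩, rfl⟩
    · apply le_antisymm
      · rintro _ ⟨c, rfl⟩
        show ((0 : SL.carrier)) = 0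
        rfl
      · rintro w hw
        have hw2 : (w : (((C.carrier × N.carrier) ⧸ K) × SL.carrier)).2 = 0 := hw
        have h1 : πE (w : (((C.carrier × N.carrier) ⧸ K) × SL.carrier)).1 = 0 := by
          rw [(hmemE' _).mp w.2, hw2, map_zero]
        have h2 : (w : (((C.carrier × N.carrier) ⧸ K) × SL.carrier)).1 ∈
            LinearMap.range ιE := by
          rw [hkerπE]
          exact h1
        obtain ⟨c, hc⟩ := h2
        refine ⟨c, ?_⟩
        apply Subtype.ext
        show ((ιE c, 0) : (((C.carrier × N.carrier) ⧸ K) × SL.carrier)) = w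
        exact Prod.ext hc hw2.symm
  obtain ⟨s', hs'_eq, hs'_sec⟩ :=
    exists_section_of_permutation C hC SL.ρ ρE' bS hbS ι' π' hse'
  -- the induced section of πE over Q
  let s := (LinearMap.fst ℤ ((C.carrier × N.carrier) ⧸ K) SL.carrier).comp
    ((E'.subtype.comp s').comp iQ)
  have hs_sec : ∀ x, πE (s x) = x := by
    intro x
    have hmem : πE ((s' (iQ x) : (((C.carrier × N.carrier) ⧸ K) × SL.carrier)).1) =
        pQ ((s' (iQ x) : (((C.carrier × N.carrier) ⧸ K) × SL.carrier)).2) :=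
      (hmemE' _).mp (s' (iQ x)).2
    have h2 : ((s' (iQ x) : (((C.carrier × N.carrier) ⧸ K) × SL.carrier)).2) = iQ x :=
      LinearMap.congr_fun hs'_sec (iQ x)
    show πE ((s' (iQ x) : (((C.carrier × N.carrier) ⧸ K) × SL.carrier)).1) = x
    rw [hmem, h2]
    exact LinearMap.congr_fun hpi x
  have hs_eq : IsEquivariantMap Q.ρ ρE s := by
    intro g x
    show ((s' (iQ (Q.ρ g x)) : (((C.carrier × N.carrier) ⧸ K) × SL.carrier)).1) =
      ρE g ((s' (iQ x) : (((C.carrier × N.carrier) ⧸ K) × SL.carrier)).1)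
    rw [hiQ_eq g x, hs'_eq g (iQ x)]
    rfl
  -- the retraction r of ιE
  let kmap := LinearMap.id (R := ℤ) (M := ((C.carrier × N.carrier) ⧸ K)) - s.comp πE
  have hkmap : ∀ e, kmap e = e - s (πE e) := fun e => rfl
  have hkrange : ∀ e, kmap e ∈ LinearMap.range ιE := by
    intro e
    rw [hkerπE]
    show πE (kmap e) = 0
    rw [hkmap, map_sub, hs_sec, sub_self]
  letI : Module ℤ ↥(LinearMap.range ιE) := (LinearMap.range ιE).module
  let r := (LinearEquiv.ofInjective ιE hιE_inj).symm.toLinearMap.comp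
    (LinearMap.codRestrict (LinearMap.range ιE) kmap hkrange)
  have hr : ∀ e, ιE (r e) = kmap e := by
    intro e
    have h1 : (LinearEquiv.ofInjective ιE hιE_inj) (r e) = ⟨kmap e, hkrange e⟩ :=
      LinearEquiv.apply_symm_apply (LinearEquiv.ofInjective ιE hιE_inj) ⟨kmap e, hkrange e⟩
    have h2 := congrArg Subtype.val h1
    rwa [LinearEquiv.ofInjective_apply] at h2
  have hrι : ∀ cc, r (ιE cc) = cc := by
    intro cc
    apply hιE_inj
    rw [hr, hkmap, hπιE, map_zero, sub_zero]
  have hr_eq : IsEquivariantMap ρE C.ρ r := by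
    intro g e
    apply hιE_inj
    rw [hr, hιE_eq g (r e), hr e, hkmap, hkmap, map_sub, hπE_eq g e, hs_eq g (πE e)]
  refine ⟨r.comp jE, ?_, ?_⟩
  · intro g n
    show r (jE (N.ρ g n)) = C.ρ g (r (jE n))
    rw [hjE_eq g n]
    exact hr_eq g (jE n)
  · apply LinearMap.ext
    intro m
    show r (jE (γmap m)) = α m
    rw [← hcomm m, hrι]
end

section
/- Let Γ be a finite group and M a Γ-lattice. Suppose 0 → P → F →^α M → 0 is a short exact sequence of Γ-lattices with F flasque and P permutation (a flasque resolution of the second type), and suppose 0 → Q → N →^γ M → 0 is a short exact sequence of Γ-lattices with Q invertible. Then there exists a ℤ[Γ]-module homomorphism φ : F → N such that γ ∘ φ = α. -/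
variable {Γ : Type} [Group Γ]

section Aux

open groupCohomology

/-- From `Subsingleton H¹`, every 1-cocycle is a coboundary. -/
lemma exists_coboundary {G : Type} [Group G] (A : Rep ℤ G)
    (hs : Subsingleton (groupCohomology.H1 A)) (f : G → A)
    (hf : ∀ g h : G, f (g * h) = A.ρ g (f h) + f g) :
    ∃ x : A, ∀ g : G, A.ρ g x - x = f g := by
  have hz : f ∈ cocycles₁ A := (mem_cocycles₁_iff f).2 hf
  have h0 : H1π A ⟨f, hz⟩ = 0 := Subsingleton.elim _ _
  obtain ⟨x, hx⟩ := (H1π_eq_zero_iff _).1 h0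
  exact ⟨x, fun g => by have := congrFun hx g; simpa [d₀₁_hom_apply] using this⟩

/-- Key vanishing, permutation case: a 1-cocycle of `Γ` with values in
`Hom_ℤ(F, L)` (with the natural action) is a coboundary when `F` is flasque
and `L` is a permutation lattice. -/
lemma perm_cocycle_coboundary {Γ : Type} [Group Γ]
    (F L : GammaLattice Γ) (hF : F.IsFlasque) (hL : L.IsPermutation)
    (C : Γ → (F.carrier →ₗ[ℤ] L.carrier))
    (hC : ∀ g h : Γ, ∀ f : F.carrier,
      C (g * h) f = L.ρ g (C h (F.ρ g⁻¹ f)) + C g f) :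
    ∃ W : F.carrier →ₗ[ℤ] L.carrier,
      ∀ (g : Γ) (f : F.carrier), C g f = L.ρ g (W (F.ρ g⁻¹ f)) - W f := by
  classical
  obtain ⟨ι, b, hb⟩ := hL
  choose σ hσ using hb
  -- basic facts about σ
  have hρρ : ∀ (V : GammaLattice Γ) (a c : Γ) (x : V.carrier),
      V.ρ a (V.ρ c x) = V.ρ (a * c) x := by
    intro V a c x; rw [map_mul]; rfl
  have hσmul : ∀ (g h : Γ) (i : ι), σ (g * h) i = σ g (σ h i) := by
    intro g h i
    apply b.injective
    rw [← hσ (g * h) i, ← hσ g (σ h i), ← hσ h i, hρρ]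
  have hσone : ∀ i : ι, σ 1 i = i := by
    intro i
    apply b.injective
    rw [← hσ 1 i, map_one]; rfl
  have hσinv : ∀ (g : Γ) (i : ι), σ g⁻¹ (σ g i) = i := by
    intro g i; rw [← hσmul, inv_mul_cancel, hσone]
  have hσinv' : ∀ (g : Γ) (i : ι), σ g (σ g⁻¹ i) = i := by
    intro g i; rw [← hσmul, mul_inv_cancel, hσone]
  -- ι is finite
  haveI := L.finite
  haveI : Finite ι := b.linearIndependent.finite_of_isNoetherian
  haveI : Fintype ι := Fintype.ofFinite ι
  -- coordinates transform by σ
  have F1 : ∀ (g : Γ) (x : L.carrier) (i : ι),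
      b.repr (L.ρ g x) i = b.repr x (σ g⁻¹ i) := by
    intro g x i
    have hmap : (b.coord i) ∘ₗ (L.ρ g : L.carrier →ₗ[ℤ] L.carrier)
        = b.coord (σ g⁻¹ i) := by
      apply b.ext
      intro k
      have hcond : (σ g k = i) ↔ (k = σ g⁻¹ i) :=
        ⟨fun h => by rw [← h, hσinv], fun h => by rw [h, hσinv']⟩
      simp only [LinearMap.coe_comp, Function.comp_apply, hσ g k, Module.Basis.coord_apply,
        Module.Basis.repr_self, Finsupp.single_apply]
      rw [if_congr hcond rfl rfl]
    have := LinearMap.congr_fun hmap x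
    simpa only [LinearMap.coe_comp, Function.comp_apply, Module.Basis.coord_apply] using this
  -- the Γ-action on ι
  letI : MulAction Γ ι :=
    { smul := fun g i => σ g i
      one_smul := fun i => hσone i
      mul_smul := fun g h i => hσmul g h i }
  set S := MulAction.orbitRel Γ ι with hS
  have hqk_smul : ∀ (g : Γ) (i : ι),
      Quotient.mk S (σ g i) = Quotient.mk S i := by
    intro g i
    exact Quotient.sound (MulAction.mem_orbit i g)
  set rep : ι → ι := fun i => (Quotient.mk S i).out with hrep
  have hrep_orbit : ∀ i : ι, ∃ g : Γ, σ g (rep i) = i := by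
    intro i
    have h := Quotient.exact (Quotient.out_eq (Quotient.mk S i))
    obtain ⟨g, hg⟩ := h
    exact ⟨g⁻¹, by rw [← (show σ g i = rep i from hg)]; exact hσinv g i⟩
  choose gsel hgsel using hrep_orbit
  have hrep_smul : ∀ (g : Γ) (i : ι), rep (σ g i) = rep i := by
    intro g i
    simp only [hrep]
    rw [hqk_smul]
  -- the per-orbit potential from flasqueness of F
  have key : ∀ o : Quotient S, ∃ x : Module.Dual ℤ F.carrier,
      ∀ h : Γ, σ h o.out = o.out → ∀ f : F.carrier,
        b.repr (C h f) o.out = x (F.ρ h⁻¹ f) - x f := by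
    intro o
    set i₀ := o.out with hi₀
    set H : Subgroup Γ := MulAction.stabilizer Γ i₀ with hH
    have hsub := hF H
    set d : H → Module.Dual ℤ F.carrier :=
      fun h => (b.coord i₀) ∘ₗ (C (h : Γ)) with hd_def
    have hstabinv : ∀ h : H, σ ((h : Γ))⁻¹ i₀ = i₀ := by
      intro h
      have h1 : σ (h : Γ) i₀ = i₀ := h.2
      conv_lhs => rw [← h1]
      rw [hσinv]
    have hd : ∀ g h : H,
        d (g * h) = (d h) ∘ₗ (F.ρ ((g : Γ))⁻¹) + d g := by
      intro g h
      apply LinearMap.ext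
      intro f
      have hco := hC (g : Γ) (h : Γ) f
      have : b.repr (C ((g : Γ) * (h : Γ)) f) i₀
          = b.repr (C (h : Γ) (F.ρ ((g : Γ))⁻¹ f)) i₀ + b.repr (C (g : Γ) f) i₀ := by
        rw [hco, map_add]
        simp only [Finsupp.coe_add, Pi.add_apply]
        rw [F1, hstabinv]
      simpa only [hd_def, LinearMap.coe_comp, Function.comp_apply, Module.Basis.coord_apply,
        LinearMap.add_apply, Subgroup.coe_mul] using this
    obtain ⟨x, hx⟩ := exists_coboundary (Rep.of (F.dual.ρ.comp H.subtype)) hsub d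
      (fun g h => by exact hd g h)
    let x' : Module.Dual ℤ F.carrier := x
    have hx' : ∀ g : H, x' ∘ₗ (F.ρ ((g : Γ))⁻¹) - x' = d g := fun g => by exact hx g
    refine ⟨x', fun h hh f => ?_⟩
    have h2 := LinearMap.congr_fun (hx' ⟨h, hh⟩) f
    simpa only [hd_def, LinearMap.sub_apply, LinearMap.coe_comp, Function.comp_apply,
      Module.Basis.coord_apply] using h2.symm
  choose e he using key
  -- the potential W
  set w : ι → Module.Dual ℤ F.carrier := fun i =>
    (e (Quotient.mk S i)).comp (F.ρ (gsel i)⁻¹) - (b.coord i) ∘ₗ (C (gsel i)) with hw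
  haveI := (@IsScalarTower.left ℤ L.carrier _ Module.toDistribMulAction.toMulAction)
  set W : F.carrier →ₗ[ℤ] L.carrier :=
    ∑ i : ι, LinearMap.smulRight (w i) (b i) with hWdef
  have hWcoord : ∀ (f : F.carrier) (i : ι), b.repr (W f) i = w i f := by
    intro f i
    rw [hWdef]
    simp only [LinearMap.coe_sum, Finset.sum_apply, map_sum, LinearMap.smulRight_apply,
      map_smul, Finsupp.coe_finset_sum, Finset.sum_apply, Finsupp.coe_smul, Pi.smul_apply,
      Module.Basis.repr_self, Finsupp.single_apply, smul_eq_mul, mul_ite, mul_one, mul_zero,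
      Finset.sum_ite_eq', Finset.mem_univ, if_true]
  refine ⟨W, fun g f => ?_⟩
  apply b.ext_elem_iff.2
  intro i
  -- notation
  set i' := σ g⁻¹ i with hi'
  have hqi' : Quotient.mk S i' = Quotient.mk S i := hqk_smul g⁻¹ i
  set i₀ := rep i with hi₀
  have hrepi' : rep i' = i₀ := hrep_smul g⁻¹ i
  set gi := gsel i with hgi_def
  set gi' := gsel i' with hgi'_def
  set h := gi⁻¹ * (g * gi') with hh_def
  have hgi : σ gi i₀ = i := hgsel i
  have hgi' : σ gi' i₀ = i' := by
    have := hgsel i'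
    rwa [hrepi'] at this
  have hstab : σ h i₀ = i₀ := by
    rw [hh_def, hσmul, hσmul, hgi', hi', hσinv', ← hgi, hσinv]
  have hgh : g * gi' = gi * h := by
    rw [hh_def, mul_inv_cancel_left]
  -- main computation
  have hE1 : b.repr (C (g * gi') f) i
      = b.repr (C gi' (F.ρ g⁻¹ f)) i' + b.repr (C g f) i := by
    rw [hC g gi' f, map_add]
    simp only [Finsupp.coe_add, Pi.add_apply]
    rw [F1]
  have hE2 : b.repr (C (gi * h) f) i
      = b.repr (C h (F.ρ gi⁻¹ f)) i₀ + b.repr (C gi f) i := by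
    rw [hC gi h f, map_add]
    simp only [Finsupp.coe_add, Pi.add_apply]
    rw [F1]
    congr 1
    rw [← hgi, hσinv]
  have hE3 : b.repr (C h (F.ρ gi⁻¹ f)) i₀
      = e (Quotient.mk S i) (F.ρ h⁻¹ (F.ρ gi⁻¹ f))
        - e (Quotient.mk S i) (F.ρ gi⁻¹ f) :=
    he (Quotient.mk S i) h hstab (F.ρ gi⁻¹ f)
  have hE4 : F.ρ h⁻¹ (F.ρ gi⁻¹ f) = F.ρ gi'⁻¹ (F.ρ g⁻¹ f) := by
    rw [hρρ, hρρ, ← mul_inv_rev, ← mul_inv_rev, ← hgh]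
  -- unfold the two sides
  have hLHS : b.repr (L.ρ g (W (F.ρ g⁻¹ f)) - W f) i
      = (e (Quotient.mk S i) (F.ρ gi'⁻¹ (F.ρ g⁻¹ f))
          - b.repr (C gi' (F.ρ g⁻¹ f)) i')
        - (e (Quotient.mk S i) (F.ρ gi⁻¹ f) - b.repr (C gi f) i) := by
    rw [map_sub]
    simp only [Finsupp.coe_sub, Pi.sub_apply]
    rw [F1, hWcoord, hWcoord]
    simp only [hw, LinearMap.sub_apply, LinearMap.coe_comp, Function.comp_apply,
      Module.Basis.coord_apply, hqi']
    rw [hqk_smul]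
  rw [hLHS]
  have hcombined : b.repr (C (g * gi') f) i
      = (e (Quotient.mk S i) (F.ρ gi'⁻¹ (F.ρ g⁻¹ f))
          - e (Quotient.mk S i) (F.ρ gi⁻¹ f)) + b.repr (C gi f) i := by
    rw [hgh, hE2, hE3, hE4]
  have := hE1
  rw [hcombined] at this
  linarith [this]

end Aux
/-- Key vanishing, invertible case. -/
lemma inv_cocycle_coboundary {Γ : Type} [Group Γ]
    (F Q : GammaLattice Γ) (hF : F.IsFlasque) (hQ : Q.IsInvertible)
    (c : Γ → (F.carrier →ₗ[ℤ] Q.carrier))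
    (hc : ∀ g h : Γ, ∀ f : F.carrier,
      c (g * h) f = Q.ρ g (c h (F.ρ g⁻¹ f)) + c g f) :
    ∃ w : F.carrier →ₗ[ℤ] Q.carrier,
      ∀ (g : Γ) (f : F.carrier), c g f = Q.ρ g (w (F.ρ g⁻¹ f)) - w f := by
  obtain ⟨L, hLperm, iQ, pQ, hiQ, hpQ, hpi⟩ := hQ
  set C : Γ → (F.carrier →ₗ[ℤ] L.carrier) := fun g => iQ ∘ₗ c g with hCdef
  have hCco : ∀ g h : Γ, ∀ f : F.carrier,
      C (g * h) f = L.ρ g (C h (F.ρ g⁻¹ f)) + C g f := by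
    intro g h f
    simp only [hCdef, LinearMap.comp_apply]
    rw [hc g h f, map_add, hiQ]
  obtain ⟨W, hW⟩ := perm_cocycle_coboundary F L hF hLperm C hCco
  refine ⟨pQ ∘ₗ W, fun g f => ?_⟩
  have h1 := congrArg pQ (hW g f)
  rw [map_sub, hpQ] at h1
  have h2 : pQ (C g f) = c g f := by
    simp only [hCdef, LinearMap.comp_apply]
    exact LinearMap.congr_fun hpi (c g f)
  rw [h2] at h1
  simpa only [LinearMap.comp_apply] using h1

/-- versality of flasque resolutions of the second type:
given `0 → P → F →[α] M → 0` with `F` flasque and `P` permutation,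
and any extension `0 → Q → N →[γ] M → 0` with `Q` invertible, there is
`φ : F → N` with `γ ∘ φ = α`. -/
theorem flasque_resolution_second_type_versal
    {Γ : Type} [Group Γ] [Finite Γ]
    (M P F Q N : GammaLattice Γ)
    (hP : P.IsPermutation) (hF : F.IsFlasque) (hQ : Q.IsInvertible)
    (i : P.carrier →ₗ[ℤ] F.carrier) (α : F.carrier →ₗ[ℤ] M.carrier)
    (hse₁ : IsShortExactSeq P.ρ F.ρ M.ρ i α)
    (j : Q.carrier →ₗ[ℤ] N.carrier) (γmap : N.carrier →ₗ[ℤ] M.carrier)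
    (hse₂ : IsShortExactSeq Q.ρ N.ρ M.ρ j γmap) :
    ∃ φ : F.carrier →ₗ[ℤ] N.carrier,
      IsEquivariantMap F.ρ N.ρ φ ∧ γmap.comp φ = α := by
  classical
  obtain ⟨hi_eq, hα_eq, hi_inj, hα_surj, hrange₁⟩ := hse₁
  obtain ⟨hj_eq, hγ_eq, hj_inj, hγ_surj, hrange₂⟩ := hse₂
  haveI := F.free
  have hρρ : ∀ (V : GammaLattice Γ) (a c : Γ) (x : V.carrier),
      V.ρ a (V.ρ c x) = V.ρ (a * c) x := by
    intro V a c x; rw [map_mul]; rfl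
  have hρcancel : ∀ (V : GammaLattice Γ) (a : Γ) (x : V.carrier),
      V.ρ a (V.ρ a⁻¹ x) = x := by
    intro V a x; rw [hρρ, mul_inv_cancel, map_one]; rfl
  have hρcancel' : ∀ (V : GammaLattice Γ) (a : Γ) (x : V.carrier),
      V.ρ a⁻¹ (V.ρ a x) = x := by
    intro V a x; rw [hρρ, inv_mul_cancel, map_one]; rfl
  -- a ℤ-linear lifting of α through γmap
  obtain ⟨φ₀, hφ₀⟩ := Module.projective_lifting_property γmap α hγ_surj
  have hφ₀' : ∀ f : F.carrier, γmap (φ₀ f) = α f := fun f => LinearMap.congr_fun hφ₀ f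
  -- the defect 1-cocycle, valued in `Hom(F, N)` with image in `j(Q)`
  set C : Γ → (F.carrier →ₗ[ℤ] N.carrier) :=
    fun g => φ₀ - (N.ρ g) ∘ₗ φ₀ ∘ₗ (F.ρ g⁻¹) with hCdef
  have hCapp : ∀ (g : Γ) (f : F.carrier), C g f = φ₀ f - N.ρ g (φ₀ (F.ρ g⁻¹ f)) := by
    intro g f
    simp only [hCdef, LinearMap.sub_apply, LinearMap.comp_apply]
  have hCmem : ∀ (g : Γ) (f : F.carrier), C g f ∈ LinearMap.range j := by
    intro g f
    rw [hrange₂, LinearMap.mem_ker, hCapp, map_sub]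
    have h2 : γmap (N.ρ g (φ₀ (F.ρ g⁻¹ f))) = α f := by
      rw [hγ_eq g, hφ₀' (F.ρ g⁻¹ f), hα_eq g⁻¹ f, hρcancel]
    rw [hφ₀' f, h2, sub_self]
  -- pull the cocycle back to `Hom(F, Q)`
  have hexists : ∀ (g : Γ) (f : F.carrier), ∃ q : Q.carrier, j q = C g f := by
    intro g f
    exact hCmem g f
  choose cfun hcfun using hexists
  letI : Module ℤ ↥(LinearMap.range j) := (LinearMap.range j).module
  set c : Γ → (F.carrier →ₗ[ℤ] Q.carrier) := fun g =>
    (LinearEquiv.ofInjective j hj_inj).symm.toLinearMap ∘ₗ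
      LinearMap.codRestrict (LinearMap.range j) (C g) (hCmem g) with hcdef
  have hjc : ∀ (g : Γ) (f : F.carrier), j (c g f) = C g f := by
    intro g f
    have e1 : (LinearEquiv.ofInjective j hj_inj) ((LinearEquiv.ofInjective j hj_inj).symm
        (⟨C g f, hCmem g f⟩ : LinearMap.range j)) = ⟨C g f, hCmem g f⟩ :=
      LinearEquiv.apply_symm_apply _ _
    have e2 : c g f = (LinearEquiv.ofInjective j hj_inj).symm ⟨C g f, hCmem g f⟩ := rfl
    rw [e2, ← LinearEquiv.ofInjective_apply (h := hj_inj), e1]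
  -- it is a cocycle
  have hcco : ∀ g h : Γ, ∀ f : F.carrier,
      c (g * h) f = Q.ρ g (c h (F.ρ g⁻¹ f)) + c g f := by
    intro g h f
    apply hj_inj
    rw [hjc, map_add, hjc, hj_eq, hjc]
    rw [hCapp, hCapp, hCapp]
    rw [map_sub, hρρ N g h, hρρ F, ← mul_inv_rev]
    abel
  -- kill it using flasqueness of F and invertibility of Q
  obtain ⟨w, hw⟩ := inv_cocycle_coboundary F Q hF hQ c hcco
  refine ⟨φ₀ + j ∘ₗ w, ?_, ?_⟩
  · intro g f
    have h1 := hw g (F.ρ g f)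
    rw [hρcancel'] at h1
    have h2 := congrArg j h1
    rw [hjc, map_sub, hj_eq, hCapp, hρcancel'] at h2
    simp only [LinearMap.add_apply, LinearMap.comp_apply, map_add]
    exact (sub_eq_sub_iff_add_eq_add.mp h2).trans (add_comm _ _)
  · apply LinearMap.ext
    intro f
    have hker : γmap (j (w f)) = 0 := by
      have : j (w f) ∈ LinearMap.ker γmap := by
        rw [← hrange₂]; exact LinearMap.mem_range_self j (w f)
      exact LinearMap.mem_ker.mp this
    simp only [LinearMap.comp_apply, LinearMap.add_apply, map_add, hker, hφ₀' f, add_zero]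
end
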